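/- arXiv:1309.0949 — 8 statements merged into one kernel-verified Lean document; each statement's English description precedes it below -/
import Mathlib

section
/- For every integer n ≥ 1, the alternating sum ∑_{r=0}^{n} (−1)^r · binom(n−r+1, r) · C_{n−r} equals 0, where C_k denotes the k-th Catalan number (Koshy's formula). -/
open Polynomial Finset

/-- Partial alternating sum `T m = ∑ (-1)^r C(m-r, r) Cat(m-r)`. -/
private def TT (m : ℕ) : ℤ :=
  ∑ r ∈ Finset.range (m + 1), (-1 : ℤ) ^ r * ((m - r).choose r : ℤ) * (catalan (m - r) : ℤ)

/-- Koshy's sum `S m = ∑ (-1)^r C(m-r+1, r) Cat(m-r)`. -/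
private def SS (m : ℕ) : ℤ :=
  ∑ r ∈ Finset.range (m + 1), (-1 : ℤ) ^ r * ((m - r + 1).choose r : ℤ) * (catalan (m - r) : ℤ)

/-- The polynomial `∑_{i ≤ N} Cat(i) (X(1-X))^i`. -/
private noncomputable def pp (N : ℕ) : Polynomial ℤ :=
  ∑ i ∈ Finset.range (N + 1), C ((catalan i : ℤ)) * (X * (1 - X)) ^ i

private noncomputable def FF (M i j : ℕ) : ℤ :=
  (catalan i : ℤ) * (catalan j : ℤ) * ((X * (1 - X) : Polynomial ℤ) ^ (i + j + 1)).coeff (M + 1)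

private lemma coeff_one_sub_X_pow (e a : ℕ) :
    ((1 - X : Polynomial ℤ) ^ e).coeff a = (-1 : ℤ) ^ a * (e.choose a : ℤ) := by
  have h : (1 - X : Polynomial ℤ) ^ e = ∑ k ∈ range (e + 1),
      C ((-1 : ℤ) ^ k * (e.choose k : ℤ)) * X ^ k := by
    have := add_pow (-X : Polynomial ℤ) 1 e
    simp only [one_pow, mul_one] at this
    rw [show (1 - X : Polynomial ℤ) = -X + 1 by ring, this]
    refine Finset.sum_congr rfl fun k _ => ?_
    rw [map_mul, map_pow, map_neg, map_one, Polynomial.C_eq_natCast, neg_pow]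
    ring
  rw [h, finset_sum_coeff]
  simp only [coeff_C_mul, coeff_X_pow]
  rw [Finset.sum_eq_single a]
  · simp
  · intro b _ hb; simp [Ne.symm hb]
  · intro ha
    have he : e < a := by
      simp only [Finset.mem_range] at ha; omega
    simp [Nat.choose_eq_zero_of_lt he]

private lemma coeff_y_pow (t m : ℕ) :
    ((X * (1 - X) : Polynomial ℤ) ^ t).coeff m =
      if t ≤ m then (-1 : ℤ) ^ (m - t) * (t.choose (m - t) : ℤ) else 0 := by
  rw [mul_pow, coeff_X_pow_mul']
  by_cases h : t ≤ m
  · simp [h, coeff_one_sub_X_pow]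
  · simp [h]

private lemma coeff_pp (N m : ℕ) (h : m ≤ N) : (pp N).coeff m = TT m := by
  rw [pp, finset_sum_coeff]
  simp only [coeff_C_mul, coeff_y_pow]
  rw [← Finset.sum_subset (Finset.range_subset_range.mpr (by omega : m + 1 ≤ N + 1)) (by
      intro i _ hi
      have : ¬ i ≤ m := by simp only [Finset.mem_range] at hi; omega
      rw [if_neg this, mul_zero])]
  have : ∀ i ∈ Finset.range (m + 1),
      (catalan i : ℤ) * (if i ≤ m then (-1 : ℤ) ^ (m - i) * ((i.choose (m - i)) : ℤ) else 0) =
      (catalan i : ℤ) * ((-1 : ℤ) ^ (m - i) * ((i.choose (m - i)) : ℤ)) := by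
    intro i hi
    rw [if_pos (by simp only [Finset.mem_range] at hi; omega)]
  rw [Finset.sum_congr rfl this, TT, ← Finset.sum_range_reflect]
  refine Finset.sum_congr rfl fun r hr => ?_
  have hr' : r ≤ m := by simp only [Finset.mem_range] at hr; omega
  have h1 : m + 1 - 1 - r = m - r := by omega
  have h2 : m - (m - r) = r := by omega
  rw [h1, h2]
  ring

private lemma coeff_one_sub_X_mul_pp (N m : ℕ) (h : m ≤ N) :
    ((1 - X) * pp N).coeff m = SS m := by
  have hexp : (1 - X) * pp N = ∑ i ∈ Finset.range (N + 1),
      C ((catalan i : ℤ)) * (X ^ i * (1 - X) ^ (i + 1)) := by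
    rw [pp, Finset.mul_sum]
    refine Finset.sum_congr rfl fun i _ => ?_
    rw [mul_pow]; ring
  rw [hexp, finset_sum_coeff]
  simp only [coeff_C_mul, coeff_X_pow_mul']
  rw [← Finset.sum_subset (Finset.range_subset_range.mpr (by omega : m + 1 ≤ N + 1)) (by
      intro i _ hi
      have : ¬ i ≤ m := by simp only [Finset.mem_range] at hi; omega
      rw [if_neg this, mul_zero])]
  have : ∀ i ∈ Finset.range (m + 1),
      (catalan i : ℤ) * (if i ≤ m then ((1 - X : Polynomial ℤ) ^ (i + 1)).coeff (m - i) else 0) =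
      (catalan i : ℤ) * ((-1 : ℤ) ^ (m - i) * (((i + 1).choose (m - i)) : ℤ)) := by
    intro i hi
    rw [if_pos (by simp only [Finset.mem_range] at hi; omega), coeff_one_sub_X_pow]
  rw [Finset.sum_congr rfl this, SS, ← Finset.sum_range_reflect]
  refine Finset.sum_congr rfl fun r hr => ?_
  have hr' : r ≤ m := by simp only [Finset.mem_range] at hr; omega
  have h1 : m + 1 - 1 - r = m - r := by omega
  have h2 : m - (m - r) = r := by omega
  rw [h1, h2]
  ring

/-- Key step: Segner's recurrence transferred to the polynomials. -/
private lemma coeff_pp_succ (M : ℕ) :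
    (pp (M + 1)).coeff (M + 1) = (X * ((1 - X) * pp M) * pp M).coeff (M + 1) := by
  -- LHS computation
  have hL : (pp (M + 1)).coeff (M + 1) =
      ∑ k ∈ range (M + 1), ∑ ij ∈ Finset.HasAntidiagonal.antidiagonal k, FF M ij.1 ij.2 := by
    rw [pp, finset_sum_coeff]
    simp only [coeff_C_mul]
    rw [Finset.sum_range_succ']
    simp only [pow_zero, catalan_zero, Nat.cast_one, one_mul]
    rw [show coeff (1 : Polynomial ℤ) (M + 1) = 0 from by simp [Polynomial.coeff_one], add_zero]
    refine Finset.sum_congr rfl fun k _ => ?_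
    rw [catalan_succ']
    push_cast
    rw [Finset.sum_mul]
    refine Finset.sum_congr rfl fun ij hij => ?_
    rw [FF, Finset.HasAntidiagonal.mem_antidiagonal.mp hij]
  -- RHS computation
  have hR : (X * ((1 - X) * pp M) * pp M).coeff (M + 1) =
      ∑ i ∈ range (M + 1), ∑ j ∈ range (M + 1), FF M i j := by
    have hring : X * ((1 - X) * pp M) * pp M = ∑ i ∈ range (M + 1), ∑ j ∈ range (M + 1),
        C ((catalan i : ℤ) * (catalan j : ℤ)) * (X * (1 - X)) ^ (i + j + 1) := by
      rw [pp, show ∀ (a b : Polynomial ℤ), X * ((1 - X) * a) * b = X * (1 - X) * (a * b) from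
        fun a b => by ring, Finset.sum_mul_sum, Finset.mul_sum]
      refine Finset.sum_congr rfl fun i _ => ?_
      rw [Finset.mul_sum]
      refine Finset.sum_congr rfl fun j _ => ?_
      rw [map_mul]
      ring
    rw [hring, finset_sum_coeff]
    refine Finset.sum_congr rfl fun i _ => ?_
    rw [finset_sum_coeff]
    refine Finset.sum_congr rfl fun j _ => ?_
    rw [coeff_C_mul, FF]
  rw [hL, hR]
  -- both sides are sums of FF over a triangle / square; extra terms vanish
  have hdisj : Set.PairwiseDisjoint (↑(range (M + 1)) : Set ℕ)
      (fun k => Finset.HasAntidiagonal.antidiagonal k) := by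
    intro a _ b _ hab
    simp only [Function.onFun, Finset.disjoint_left]
    intro ij h1 h2
    exact hab ((Finset.HasAntidiagonal.mem_antidiagonal.mp h1).symm.trans (Finset.HasAntidiagonal.mem_antidiagonal.mp h2))
  rw [← Finset.sum_biUnion hdisj]
  have hset : (range (M + 1)).biUnion (fun k => Finset.HasAntidiagonal.antidiagonal k) =
      (range (M + 1) ×ˢ range (M + 1)).filter (fun ij => ij.1 + ij.2 ≤ M) := by
    ext ij
    simp only [Finset.mem_biUnion, Finset.mem_range, Finset.HasAntidiagonal.mem_antidiagonal,
      Finset.mem_filter, Finset.mem_product]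
    constructor
    · rintro ⟨k, hk, rfl⟩; omega
    · intro h; exact ⟨ij.1 + ij.2, by omega, rfl⟩
  rw [hset]
  rw [show (∑ i ∈ range (M + 1), ∑ j ∈ range (M + 1), FF M i j) =
      ∑ ij ∈ range (M + 1) ×ˢ range (M + 1), FF M ij.1 ij.2 from
    (Finset.sum_product' (s := range (M + 1)) (t := range (M + 1))
      (f := fun i j => FF M i j)).symm]
  refine Finset.sum_subset (Finset.filter_subset _ _) fun ij hmem hnot => ?_
  have hgt : ¬ (ij.1 + ij.2 ≤ M) := fun hle => hnot (Finset.mem_filter.mpr ⟨hmem, hle⟩)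
  rw [FF, coeff_y_pow, if_neg (by omega : ¬ ij.1 + ij.2 + 1 ≤ M + 1)]
  ring

private lemma TT_succ (M : ℕ) :
    TT (M + 1) = ∑ ab ∈ Finset.HasAntidiagonal.antidiagonal M, SS ab.1 * TT ab.2 := by
  have h1 : TT (M + 1) = (pp (M + 1)).coeff (M + 1) := (coeff_pp (M + 1) (M + 1) le_rfl).symm
  rw [h1, coeff_pp_succ,
    show X * ((1 - X) * pp M) * pp M = X * ((1 - X) * pp M * pp M) from by ring,
    coeff_X_mul, coeff_mul]
  refine Finset.sum_congr rfl fun ab hab => ?_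
  have hs := Finset.HasAntidiagonal.mem_antidiagonal.mp hab
  rw [coeff_one_sub_X_mul_pp M ab.1 (by omega), coeff_pp M ab.2 (by omega)]

private lemma SS_eq (M : ℕ) : SS (M + 1) = TT (M + 1) - TT M := by
  have h : ((1 - X) * pp (M + 1)).coeff (M + 1) =
      (pp (M + 1)).coeff (M + 1) - (pp (M + 1)).coeff M := by
    rw [sub_mul, one_mul, coeff_sub, coeff_X_mul]
  rw [← coeff_one_sub_X_mul_pp (M + 1) (M + 1) le_rfl, h,
    coeff_pp (M + 1) (M + 1) le_rfl, coeff_pp (M + 1) M (by omega)]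

private lemma SS_zero : SS 0 = 1 := by simp [SS]

private lemma TT_eq_one : ∀ n, TT n = 1 := by
  intro n
  induction n using Nat.strong_induction_on with
  | _ n ih =>
    match n with
    | 0 => simp [TT]
    | (M + 1) =>
      rw [TT_succ]
      have hterm : ∀ ab ∈ Finset.HasAntidiagonal.antidiagonal M,
          SS ab.1 * TT ab.2 = if ab.1 = 0 then 1 else 0 := by
        intro ab hab
        have hs := Finset.HasAntidiagonal.mem_antidiagonal.mp hab
        have h2 : TT ab.2 = 1 := ih ab.2 (by omega)
        rcases Nat.eq_zero_or_pos ab.1 with h0 | h0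
        · rw [h0, SS_zero, h2, if_pos rfl]; ring
        · obtain ⟨a, h1⟩ : ∃ a, ab.1 = a + 1 := ⟨ab.1 - 1, by omega⟩
          rw [h1, SS_eq, ih (a + 1) (by omega), ih a (by omega), h2,
            if_neg (Nat.succ_ne_zero a)]
          ring
      rw [Finset.sum_congr rfl hterm, Finset.Nat.sum_antidiagonal_eq_sum_range_succ_mk]
      simp

/-- **Koshy's formula.** For every integer `n ≥ 1`,
`∑_{r=0}^{n} (−1)^r · binom(n−r+1, r) · C_{n−r} = 0`,
where `C_k = (1/(k+1))·binom(2k,k)` is the `k`-th Catalan number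
(Mathlib's `catalan`). -/
theorem koshy_formula (n : ℕ) (hn : 1 ≤ n) :
    ∑ r ∈ Finset.range (n + 1),
      (-1 : ℤ) ^ r * ((n - r + 1).choose r : ℤ) * (catalan (n - r) : ℤ) = 0 := by
  obtain ⟨M, rfl⟩ : ∃ M, n = M + 1 := ⟨n - 1, by omega⟩
  have : SS (M + 1) = 0 := by rw [SS_eq, TT_eq_one, TT_eq_one]; ring
  simpa [SS] using this
end

section
/- For all integers n ≥ 1 and j ≥ 0, ∑_{m ≥ j} binom(m, j) · g_{n,m} = binom(n−j+1, j) · C_{n−j}, where g_{n,m} is the number of elevated Dyck paths of length 2n+2 having exactly m up-peaks. -/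
/-- A Dyck path, encoded as a list of booleans where `true` is a `U`-step
and `false` is a `D`-step: equal numbers of `U`'s and `D`'s, and every
prefix has at least as many `U`'s as `D`'s. -/
def IsDyckPath (w : List Bool) : Prop :=
  w.count true = w.count false ∧ ∀ p : List Bool, p <+: w → p.count false ≤ p.count true

/-- An elevated Dyck path of length `2n+2` is `U p D` where `p` is a Dyck
path of length `2n`. -/
def IsElevatedDyckPath (n : ℕ) (w : List Bool) : Prop :=
  ∃ p : List Bool, IsDyckPath p ∧ p.length = 2 * n ∧ w = true :: (p ++ [false])

/-- The number of up-peaks of a path, i.e. occurrences of `UUD` as a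
consecutive factor. -/
def upPeaks (w : List Bool) : ℕ :=
  (List.range w.length).countP fun i => [true, true, false] <+: w.drop i

/-- `g n m` is the number of elevated Dyck paths of length `2n+2` having
exactly `m` up-peaks. -/
noncomputable def g (n m : ℕ) : ℕ :=
  Nat.card {w : List Bool // IsElevatedDyckPath n w ∧ upPeaks w = m}

namespace SumUpPeaks
open List

attribute [local instance] Classical.propDecidable

def ht (w : List Bool) : ℤ := (w.count true : ℤ) - w.count false

@[simp] lemma ht_nil : ht [] = 0 := by simp [ht]

@[simp] lemma ht_append (a b : List Bool) : ht (a ++ b) = ht a + ht b := by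
  simp [ht, count_append]; ring

@[simp] lemma ht_cons (b : Bool) (w : List Bool) :
    ht (b :: w) = (if b then 1 else -1) + ht w := by
  cases b <;> simp [ht, count_cons] <;> ring

@[simp] lemma ht_single (b : Bool) : ht [b] = if b then 1 else -1 := by
  rw [ht_cons, ht_nil, add_zero]

def ElevStruct (w : List Bool) : Prop :=
  w ≠ [] ∧ ht w = 0 ∧ ∀ i, 0 < i → i < w.length → 0 < ht (w.take i)

lemma isDyckPath_iff (w : List Bool) :
    IsDyckPath w ↔ ht w = 0 ∧ ∀ i, 0 ≤ ht (w.take i) := by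
  constructor
  · rintro ⟨h1, h2⟩
    refine ⟨by simp [ht, h1], fun i => ?_⟩
    have := h2 _ (take_prefix i w)
    simp [ht]; omega
  · rintro ⟨h1, h2⟩
    constructor
    · simp [ht] at h1; omega
    · intro p hp
      rw [prefix_iff_eq_take] at hp
      have := h2 p.length
      rw [← hp] at this
      simp [ht] at this; omega

lemma isElevated_iff (n : ℕ) (w : List Bool) :
    IsElevatedDyckPath n w ↔ w.length = 2 * n + 2 ∧ ElevStruct w := by
  constructor
  · rintro ⟨p, hp, hlen, rfl⟩
    rw [isDyckPath_iff] at hp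
    refine ⟨?_, by simp, by simp [hp.1], fun i h0 hi => ?_⟩
    · simp only [length_cons, length_append, length_singleton, length_nil]; omega
    · simp only [length_cons, length_append, length_singleton, length_nil] at hi
      match i, h0 with
      | i + 1, _ =>
        have hile : i ≤ p.length := by omega
        rw [take_succ_cons, take_append_of_le_length hile, ht_cons]
        have := hp.2 i
        simp only [if_true]
        omega
  · rintro ⟨hlen, hne, hht, hstrict⟩
    match w, hne with
    | b :: zs, _ =>
      have hzs : zs ≠ [] := by
        intro h; subst h; simp at hlen
      obtain ⟨p, c, rfl⟩ : ∃ p c, zs = p ++ [c] :=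
        ⟨zs.dropLast, zs.getLast hzs, (dropLast_append_getLast hzs).symm⟩
      have hlen' : p.length = 2 * n := by
        simp only [length_cons, length_append, length_singleton, length_nil] at hlen; omega
      have hlen2 : (b :: (p ++ [c])).length = 2 * n + 2 := hlen
      have hb : b = true := by
        have h1 := hstrict 1 one_pos (by rw [hlen2]; omega)
        rw [take_succ_cons, take_zero] at h1
        cases b
        · rw [ht_single] at h1; simp at h1
        · rfl
      subst hb
      have hc : c = false := by
        have h1 := hstrict (2 * n + 1) (by omega) (by rw [hlen2]; omega)
        have h2 : (true :: (p ++ [c])).take (2 * n + 1) = true :: p := by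
          rw [take_succ_cons, take_append_of_le_length (by omega),
            take_of_length_le (by omega)]
        rw [h2, ht_cons] at h1
        have h3 : ht (true :: (p ++ [c])) = 0 := hht
        rw [ht_cons, ht_append, ht_single] at h3
        simp only [if_true] at h1 h3
        cases c
        · rfl
        · exfalso; simp at h3; omega
      subst hc
      refine ⟨p, ?_, hlen', rfl⟩
      rw [isDyckPath_iff]
      have h3 : ht (true :: (p ++ [false])) = 0 := hht
      rw [ht_cons, ht_append, ht_single] at h3
      simp only [if_true, if_neg (by simp : ¬ (false = true))] at h3
      have hhtp : ht p = 0 := by omega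
      refine ⟨hhtp, fun i => ?_⟩
      rcases Nat.lt_or_ge i p.length with hi | hi
      · have h1 := hstrict (i + 1) (by omega) (by rw [hlen2]; omega)
        rw [take_succ_cons, take_append_of_le_length (by omega), ht_cons] at h1
        simp only [if_true] at h1
        omega
      · rw [take_of_length_le hi, hhtp]


open DyckStep

def toStep : Bool → DyckStep := fun b => if b then U else D
def toBool : DyckStep → Bool := fun s => match s with | U => true | D => false

lemma toBool_toStep : ∀ b, toBool (toStep b) = b := by decide
lemma toStep_toBool : ∀ s, toStep (toBool s) = s := by intro s; cases s <;> rfl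

lemma toStep_inj : Function.Injective toStep := by
  intro a b h; rw [← toBool_toStep a, h, toBool_toStep]
lemma toBool_inj : Function.Injective toBool := by
  intro a b h; rw [← toStep_toBool a, h, toStep_toBool]

lemma count_true_add_count_false (l : List Bool) :
    l.count true + l.count false = l.length := by
  induction l with
  | nil => rfl
  | cons a tl ih => cases a <;> simp only [count_cons, length_cons, ← ih] <;> simp <;> omega

lemma cU (p : List Bool) : (p.map toStep).count U = p.count true := by
  exact List.count_map_of_injective p toStep toStep_inj true
lemma cD (p : List Bool) : (p.map toStep).count D = p.count false := by
  exact List.count_map_of_injective p toStep toStep_inj false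
lemma cT (l : List DyckStep) : (l.map toBool).count true = l.count U := by
  exact List.count_map_of_injective l toBool toBool_inj U
lemma cF (l : List DyckStep) : (l.map toBool).count false = l.count D := by
  exact List.count_map_of_injective l toBool toBool_inj D

/-- Dyck paths of length `2k` are equivalent to Dyck words of semilength `k`. -/
def dyckEquiv (k : ℕ) :
    {p : List Bool // IsDyckPath p ∧ p.length = 2 * k} ≃ {d : DyckWord // d.semilength = k} where
  toFun p := ⟨⟨p.1.map toStep, by rw [cU, cD]; exact p.2.1.1, fun i => by
      rw [← List.map_take, cU, cD]
      exact p.2.1.2 _ (List.take_prefix i p.1)⟩, by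
    have h1 := p.2.1.1
    have h2 := count_true_add_count_false p.1
    have h3 := p.2.2
    show (p.1.map toStep).count U = k
    rw [cU]; omega⟩
  invFun d := ⟨d.1.toList.map toBool, ⟨by rw [cT, cF]; exact d.1.count_U_eq_count_D,
      fun q hq => by
        rw [List.prefix_iff_eq_take] at hq
        rw [hq, ← List.map_take, cT, cF]
        exact d.1.count_D_le_count_U _⟩, by
      rw [List.length_map, ← d.1.two_mul_semilength_eq_length, d.2]⟩
  left_inv p := by
    apply Subtype.ext
    show (p.1.map toStep).map toBool = p.1
    rw [List.map_map]
    simp [Function.comp_def, toBool_toStep]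
  right_inv d := by
    apply Subtype.ext
    apply DyckWord.ext
    show (d.1.toList.map toBool).map toStep = d.1.toList
    rw [List.map_map]
    simp [Function.comp_def, toStep_toBool]

/-- Elevated Dyck paths of semilength `k+1` are equivalent to Dyck paths of length `2k`. -/
def elevEquiv (k : ℕ) :
    {w : List Bool // IsElevatedDyckPath k w} ≃ {p : List Bool // IsDyckPath p ∧ p.length = 2 * k} where
  toFun w := ⟨(w.1.drop 1).dropLast, by
    obtain ⟨p, hp, hl, hw⟩ := w.2
    rw [hw]
    simp only [List.drop_one, List.tail_cons, List.dropLast_concat]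
    exact ⟨hp, hl⟩⟩
  invFun p := ⟨true :: (p.1 ++ [false]), ⟨p.1, p.2.1, p.2.2, rfl⟩⟩
  left_inv w := by
    apply Subtype.ext
    obtain ⟨p, hp, hl, hw⟩ := w.2
    simp only [hw, List.drop_one, List.tail_cons, List.dropLast_concat]
  right_inv p := by
    apply Subtype.ext
    show ((true :: (p.1 ++ [false])).drop 1).dropLast = p.1
    simp only [List.drop_one, List.tail_cons, List.dropLast_concat]

lemma card_elevated (k : ℕ) :
    Nat.card {w : List Bool // IsElevatedDyckPath k w} = catalan k := by
  rw [Nat.card_congr ((elevEquiv k).trans (dyckEquiv k)), Nat.card_eq_fintype_card]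
  exact DyckWord.card_dyckWord_semilength_eq_catalan k


section Finsets

noncomputable def allLists (α : Type*) [Fintype α] (L : ℕ) : Finset (List α) :=
  (Finset.univ : Finset (Fin L → α)).image List.ofFn

lemma mem_allLists {α : Type*} [Fintype α] {L : ℕ} {l : List α} :
    l ∈ allLists α L ↔ l.length = L := by
  constructor
  · rintro hl
    obtain ⟨f, -, rfl⟩ := Finset.mem_image.mp hl
    exact List.length_ofFn
  · intro h
    subst h
    exact Finset.mem_image.mpr ⟨fun i => l[(i : ℕ)], Finset.mem_univ _, List.ofFn_getElem⟩

noncomputable def E (n : ℕ) : Finset (List Bool) := (allLists Bool (2 * n + 2)).filter (IsElevatedDyckPath n)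

lemma mem_E {n : ℕ} {w : List Bool} : w ∈ E n ↔ IsElevatedDyckPath n w := by
  rw [E, Finset.mem_filter, mem_allLists]
  exact ⟨fun h => h.2, fun h => ⟨((isElevated_iff n w).mp h).1, h⟩⟩

lemma g_eq (n m : ℕ) : g n m = ((E n).filter (fun w => upPeaks w = m)).card := by
  rw [g, Nat.card_congr (Equiv.subtypeEquivRight (q := fun w => w ∈ (E n).filter
    (fun w => upPeaks w = m)) (fun w => by simp only [Finset.mem_filter, mem_E]))]
  rw [Nat.card_eq_fintype_card, Fintype.card_coe]

lemma card_E (k : ℕ) : (E k).card = catalan k := by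
  rw [← card_elevated k, Nat.card_congr (Equiv.subtypeEquivRight
    (q := fun w => w ∈ E k) (fun w => mem_E.symm))]
  rw [Nat.card_eq_fintype_card, Fintype.card_coe]

lemma card_filter_range (L : ℕ) (p : ℕ → Prop) [DecidablePred p] :
    ((Finset.range L).filter p).card = (List.range L).countP (fun i => p i) := by
  induction L with
  | zero => rfl
  | succ L ih =>
    rw [Finset.range_add_one, Finset.filter_insert, List.range_succ, List.countP_append]
    by_cases h : p L
    · rw [if_pos h, Finset.card_insert_of_notMem (fun hc => by
        simp only [Finset.mem_filter, Finset.mem_range] at hc; omega), ih]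
      simp [h]
    · rw [if_neg h, ih]
      simp [h]

noncomputable def peakF (w : List Bool) : Finset ℕ :=
  (Finset.range w.length).filter (fun i => [true, true, false] <+: w.drop i)

lemma upPeaks_eq_card (w : List Bool) : upPeaks w = (peakF w).card := by
  rw [peakF, card_filter_range, upPeaks]

lemma upPeaks_le_length (w : List Bool) : upPeaks w ≤ w.length := by
  rw [upPeaks]
  exact le_trans List.countP_le_length (by rw [List.length_range])

lemma lhs_eq (n j : ℕ) :
    ∑ m ∈ Finset.Icc j (2 * n + 2), m.choose j * g n m =
      ((E n).sigma (fun w => Finset.powersetCard j (peakF w))).card := by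
  rw [Finset.card_sigma]
  have h1 : ∀ w ∈ E n, (Finset.powersetCard j (peakF w)).card = (upPeaks w).choose j := by
    intro w _
    rw [Finset.card_powersetCard, upPeaks_eq_card]
  rw [Finset.sum_congr rfl h1]
  have h2 : ∀ w ∈ E n, upPeaks w ∈ Finset.range (2 * n + 3) := by
    intro w hw
    rw [Finset.mem_range]
    have := upPeaks_le_length w
    have hl : w.length = 2 * n + 2 := ((isElevated_iff n w).mp (mem_E.mp hw)).1
    omega
  rw [← Finset.sum_fiberwise_of_maps_to h2 (fun w => (upPeaks w).choose j)]
  rw [show ∑ m ∈ Finset.Icc j (2 * n + 2), m.choose j * g n m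
      = ∑ m ∈ Finset.range (2 * n + 3), m.choose j * g n m from
    (Finset.sum_subset (fun m hm => by
        rw [Finset.mem_Icc] at hm; rw [Finset.mem_range]; omega)
      (fun m hm1 hm2 => by
        rw [Finset.mem_range] at hm1
        rw [Finset.mem_Icc] at hm2
        rw [Nat.choose_eq_zero_of_lt (by omega), zero_mul]))]
  refine Finset.sum_congr rfl (fun m _ => ?_)
  rw [g_eq]
  have : ∀ w ∈ (E n).filter (fun w => upPeaks w = m),
      (upPeaks w).choose j = m.choose j := fun w hw => by
    rw [Finset.mem_filter] at hw
    rw [hw.2]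
  rw [Finset.sum_congr rfl this, Finset.sum_const, smul_eq_mul, mul_comm]

lemma countP_range_getElem {α : Type*} [DecidableEq α] (l : List α) (b : α) :
    (List.range l.length).countP (fun i => l[i]? = some b) = l.count b := by
  induction l with
  | nil => rfl
  | cons a tl ih =>
    rw [List.length_cons, List.range_succ_eq_map, List.countP_cons, List.countP_map]
    have : ((fun i => decide ((a :: tl)[i]? = some b)) ∘ Nat.succ)
        = fun i => decide (tl[i]? = some b) := by
      funext i
      simp [List.getElem?_cons_succ]
    rw [this, ih, List.count_cons]
    simp only [List.getElem?_cons_zero]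
    rcases eq_or_ne a b with rfl | h
    · simp
    · simp [h, Ne.symm h]

noncomputable def uF (q : List Bool) : Finset ℕ :=
  (Finset.range q.length).filter (fun i => q[i]? = some true)

lemma card_uF (q : List Bool) : (uF q).card = q.count true := by
  rw [uF, card_filter_range, ← countP_range_getElem q true]

lemma count_true_of_elevated {k : ℕ} {q : List Bool} (h : IsElevatedDyckPath k q) :
    q.count true = k + 1 := by
  obtain ⟨hlen, -, hht, -⟩ := (isElevated_iff k q).mp h
  have h1 : (q.count true : ℤ) = q.count false := by
    simpa [ht, sub_eq_zero] using hht
  have h2 := count_true_add_count_false q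
  omega

lemma rhs_eq (k j : ℕ) :
    ((E k).sigma (fun q => Finset.powersetCard j (uF q))).card =
      (k + 1).choose j * catalan k := by
  rw [Finset.card_sigma]
  have : ∀ q ∈ E k, (Finset.powersetCard j (uF q)).card = (k + 1).choose j := fun q hq => by
    rw [Finset.card_powersetCard, card_uF, count_true_of_elevated (mem_E.mp hq)]
  rw [Finset.sum_congr rfl this, Finset.sum_const, smul_eq_mul, card_E, mul_comm]

end Finsets

section Marked

/-- The expansion block of a marked letter: `none` (a marked `U`) expands to `UUD`. -/
def blk : Option Bool → List Bool
  | none => [true, true, false]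
  | some b => [b]

/-- Expand a marked word into the long path (marked letters become `UUD`). -/
def ex1 (x : List (Option Bool)) : List Bool := x.flatMap blk

/-- Expand a marked word into the short path (marked letters become `U`). -/
def ex2 (x : List (Option Bool)) : List Bool := x.map (fun a => a.getD true)

@[simp] lemma ex1_nil : ex1 [] = [] := rfl
@[simp] lemma ex2_nil : ex2 [] = [] := rfl

lemma ex1_cons (a : Option Bool) (xs : List (Option Bool)) :
    ex1 (a :: xs) = blk a ++ ex1 xs := rfl

lemma ex2_cons (a : Option Bool) (xs : List (Option Bool)) :
    ex2 (a :: xs) = a.getD true :: ex2 xs := rfl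

lemma ex1_append (a b : List (Option Bool)) : ex1 (a ++ b) = ex1 a ++ ex1 b :=
  List.flatMap_append ..

@[simp] lemma length_ex2 (x : List (Option Bool)) : (ex2 x).length = x.length :=
  List.length_map ..

lemma ex2_take (x : List (Option Bool)) (i : ℕ) : ex2 (x.take i) = (ex2 x).take i :=
  List.map_take ..

lemma length_ex1 (x : List (Option Bool)) :
    (ex1 x).length = x.length + 2 * x.count none := by
  induction x with
  | nil => rfl
  | cons a xs ih =>
    rw [ex1_cons, List.length_append, ih, List.length_cons, List.count_cons]
    cases a <;> simp [blk] <;> omega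

lemma ex1_eq_nil_iff (x : List (Option Bool)) : ex1 x = [] ↔ x = [] := by
  constructor
  · intro h
    have := length_ex1 x
    rw [h] at this
    simp only [List.length_nil] at this
    exact List.eq_nil_of_length_eq_zero (by omega)
  · rintro rfl; rfl

lemma ht_blk (a : Option Bool) : ht (blk a) = if a.getD true then 1 else -1 := by
  cases a with
  | none => simp [blk, ht]
  | some b => cases b <;> simp [blk, ht]

lemma ht_ex1_eq_ht_ex2 (x : List (Option Bool)) : ht (ex1 x) = ht (ex2 x) := by
  induction x with
  | nil => rfl
  | cons a xs ih => rw [ex1_cons, ex2_cons, ht_append, ht_blk, ht_cons, ih]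

lemma ex1_take_prefix (x : List (Option Bool)) (i : ℕ) : ex1 (x.take i) <+: ex1 x := by
  conv_rhs => rw [← List.take_append_drop i x]
  rw [ex1_append]
  exact List.prefix_append _ _

/-- Decomposition of a prefix of an expanded word. -/
lemma prefix_ex1 {p : List Bool} {x : List (Option Bool)} (h : p <+: ex1 x) :
    ∃ i, i ≤ x.length ∧ (p = ex1 (x.take i) ∨
      ∃ hi : i < x.length, x[i] = none ∧
        (p = ex1 (x.take i) ++ [true] ∨ p = ex1 (x.take i) ++ [true, true])) := by
  induction x generalizing p with
  | nil =>
    refine ⟨0, by omega, Or.inl ?_⟩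
    simpa using List.prefix_nil.mp h
  | cons a xs ih =>
    rw [ex1_cons] at h
    rcases le_or_gt p.length (blk a).length with hle | hlt
    · -- p is a prefix of blk a
      have hpb : p <+: blk a :=
        List.prefix_of_prefix_length_le h (List.prefix_append _ _) hle
      rw [List.prefix_iff_eq_take] at hpb
      cases a with
      | some b =>
        simp only [blk, List.length_singleton] at hle
        interval_cases hl : p.length
        · refine ⟨0, by omega, Or.inl ?_⟩
          simpa using List.eq_nil_of_length_eq_zero hl
        · refine ⟨1, by simp, Or.inl ?_⟩
          rw [hpb]
          simp [blk, ex1_cons]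
      | none =>
        have hle3 : p.length ≤ 3 := by
          simpa [blk] using hle
        interval_cases hl : p.length
        · refine ⟨0, by omega, Or.inl ?_⟩
          simpa using List.eq_nil_of_length_eq_zero hl
        · exact ⟨0, by omega, Or.inr ⟨by simp, rfl, Or.inl (by rw [hpb]; rfl)⟩⟩
        · exact ⟨0, by omega, Or.inr ⟨by simp, rfl, Or.inr (by rw [hpb]; rfl)⟩⟩
        · refine ⟨1, by simp, Or.inl ?_⟩
          rw [hpb]
          simp [blk, ex1_cons]
    · -- blk a is a prefix of p
      have hbp : blk a <+: p :=
        List.prefix_of_prefix_length_le (List.prefix_append _ _) h (le_of_lt hlt)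
      obtain ⟨q, rfl⟩ := hbp
      have hq : q <+: ex1 xs := by
        obtain ⟨t, ht⟩ := h
        rw [List.append_assoc] at ht
        exact ⟨t, List.append_cancel_left ht⟩
      obtain ⟨i, hi, hcase⟩ := ih hq
      refine ⟨i + 1, by simpa using hi, ?_⟩
      have htake : ex1 ((a :: xs).take (i + 1)) = blk a ++ ex1 (xs.take i) := by
        rw [List.take_succ_cons, ex1_cons]
      rcases hcase with h1 | ⟨hlt2, hnone, h2⟩
      · exact Or.inl (by rw [htake, h1])
      · refine Or.inr ⟨by simpa using hlt2, by simpa using hnone, ?_⟩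
        rcases h2 with h2 | h2 <;> [left; right] <;> rw [htake, h2, List.append_assoc]

lemma elevStruct_ex1_iff (x : List (Option Bool)) :
    ElevStruct (ex1 x) ↔ ElevStruct (ex2 x) := by
  constructor
  · rintro ⟨hne, hht, hstrict⟩
    have hxne : x ≠ [] := fun h => hne (by rw [h]; rfl)
    refine ⟨fun h => hxne (by simpa using congrArg List.length h),
      by rw [← ht_ex1_eq_ht_ex2]; exact hht, fun i h0 hi => ?_⟩
    rw [length_ex2] at hi
    rw [← ex2_take, ← ht_ex1_eq_ht_ex2]
    set L := (ex1 (x.take i)).length with hL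
    have h1 : ex1 (x.take i) = (ex1 x).take L := by
      conv_rhs => rw [← List.take_append_drop i x, ex1_append, hL, List.take_left]
    have hL0 : 0 < L := by
      rw [hL, length_ex1, List.length_take]
      omega
    have hLlt : L < (ex1 x).length := by
      conv_rhs => rw [← List.take_append_drop i x, ex1_append, List.length_append]
      have : ex1 (x.drop i) ≠ [] := fun h => by
        have h2 := (ex1_eq_nil_iff _).mp h
        have h3 := congrArg List.length h2
        simp only [List.length_drop, List.length_nil] at h3
        omega
      have := List.length_pos_iff.mpr this
      omega
    rw [h1]
    exact hstrict L hL0 hLlt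
  · rintro ⟨hne, hht, hstrict⟩
    have hxne : x ≠ [] := fun h => hne (by rw [h]; rfl)
    refine ⟨by rw [Ne, ex1_eq_nil_iff]; exact hxne,
      by rw [ht_ex1_eq_ht_ex2]; exact hht, fun i h0 hi => ?_⟩
    have hpre : (ex1 x).take i <+: ex1 x := List.take_prefix i (ex1 x)
    obtain ⟨k, hk, hcase⟩ := prefix_ex1 hpre
    have hlen : ((ex1 x).take i).length = i := by
      rw [List.length_take]
      omega
    have key : ∀ m, m ≤ x.length → (m ≠ 0 → m ≠ x.length → 0 < ht (ex1 (x.take m))) := by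
      intro m hm hm0 hmx
      rw [ht_ex1_eq_ht_ex2, ex2_take]
      exact hstrict m (by omega) (by rw [length_ex2]; omega)
    rcases hcase with h1 | ⟨hklt, hknone, h2⟩
    · -- take i (ex1 x) = ex1 (take k x)
      have hk0 : k ≠ 0 := by
        intro h
        rw [h] at h1
        simp only [List.take_zero, ex1_nil] at h1
        rw [h1] at hlen
        simp only [List.length_nil] at hlen
        omega
      have hkx : k ≠ x.length := by
        intro h
        rw [h, List.take_of_length_le (le_refl _)] at h1
        have := congrArg List.length h1
        rw [hlen] at this
        omega
      rw [h1]
      exact key k hk hk0 hkx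
    · have hnn : 0 ≤ ht (ex1 (x.take k)) := by
        rcases Nat.eq_zero_or_pos k with rfl | hk0
        · simp
        · have hkx : k ≠ x.length := by omega
          have := key k hk (by omega) hkx
          omega
      rcases h2 with h2 | h2 <;> rw [h2, ht_append] <;> simp <;> omega

lemma elev_ex1 {x : List (Option Bool)} {k j : ℕ}
    (h2 : IsElevatedDyckPath k (ex2 x)) (hj : x.count none = j) :
    IsElevatedDyckPath (k + j) (ex1 x) := by
  rw [isElevated_iff] at h2 ⊢
  obtain ⟨hlen, hstr⟩ := h2
  rw [length_ex2] at hlen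
  refine ⟨by rw [length_ex1, hlen, hj]; ring, (elevStruct_ex1_iff x).mpr hstr⟩

lemma elev_ex2 {x : List (Option Bool)} {n : ℕ}
    (h1 : IsElevatedDyckPath n (ex1 x)) :
    x.count none ≤ n ∧ IsElevatedDyckPath (n - x.count none) (ex2 x) := by
  rw [isElevated_iff] at h1 ⊢
  obtain ⟨hlen, hstr⟩ := h1
  rw [length_ex1] at hlen
  have hxne : x ≠ [] := hstr.1 ∘ (ex1_eq_nil_iff x).mpr
  have hx1 : 1 ≤ x.length := List.length_pos_iff.mpr hxne
  have hcle : x.count none ≤ x.length := List.count_le_length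
  have hjn : x.count none ≤ n := by omega
  refine ⟨hjn, ⟨by rw [length_ex2]; omega, (elevStruct_ex1_iff x).mp hstr⟩⟩

/-- Positions of marked letters in a marked word. -/
noncomputable def vF (x : List (Option Bool)) : Finset ℕ :=
  (Finset.range x.length).filter (fun i => x[i]? = some none)

lemma countP_range_getElem_opt (l : List (Option Bool)) :
    (List.range l.length).countP (fun i => l[i]? = some none) = l.count none := by
  induction l with
  | nil => rfl
  | cons a tl ih =>
    rw [List.length_cons, List.range_succ_eq_map, List.countP_cons, List.countP_map]
    have h0 : ((fun i => decide ((a :: tl)[i]? = some none)) ∘ Nat.succ)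
        = fun i => decide (tl[i]? = some none) := by
      funext i
      simp [List.getElem?_cons_succ]
    rw [h0, ih, List.count_cons]
    simp only [List.getElem?_cons_zero]
    rcases eq_or_ne a none with rfl | h
    · simp
    · simp [h, Ne.symm h]

lemma card_vF (x : List (Option Bool)) : (vF x).card = x.count none := by
  rw [vF, card_filter_range, ← countP_range_getElem_opt x]

lemma mem_vF {x : List (Option Bool)} {i : ℕ} :
    i ∈ vF x ↔ i < x.length ∧ x[i]? = some none := by
  rw [vF, Finset.mem_filter, Finset.mem_range]

/-- Position in the long expansion corresponding to position `i` of the marked word. -/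
def pos1 (x : List (Option Bool)) (i : ℕ) : ℕ := (ex1 (x.take i)).length

lemma pos1_eq (x : List (Option Bool)) (i : ℕ) :
    pos1 x i = (x.take i).length + 2 * (x.take i).count none := by
  rw [pos1, length_ex1]

lemma pos1_lt_of_lt {x : List (Option Bool)} {i i' : ℕ} (h : i < i') (h' : i' ≤ x.length) :
    pos1 x i < pos1 x i' := by
  rw [pos1_eq, pos1_eq]
  have hcle : (x.take i).count none ≤ (x.take i').count none := by
    have hsub : x.take i <+ x.take i' := by
      have h2 : (x.take i').take i = x.take i := by
        rw [List.take_take]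
        congr 1
        omega
      rw [← h2]
      exact List.take_sublist i _
    exact hsub.count_le none
  rw [List.length_take, List.length_take]
  omega

/-- The up-peak positions in the long expansion coming from the markings. -/
noncomputable def pF (x : List (Option Bool)) : Finset ℕ := (vF x).image (pos1 x)

lemma mem_pF {x : List (Option Bool)} {m : ℕ} :
    m ∈ pF x ↔ ∃ i, i ∈ vF x ∧ pos1 x i = m := by
  rw [pF, Finset.mem_image]

lemma pos1_injOn (x : List (Option Bool)) : Set.InjOn (pos1 x) (vF x) := by
  intro i hi i' hi' hii
  rw [Finset.mem_coe, mem_vF] at hi hi'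
  by_contra hne
  rcases lt_or_gt_of_ne hne with h | h
  · exact absurd hii (Nat.ne_of_lt (pos1_lt_of_lt h (le_of_lt hi'.1)))
  · exact absurd hii.symm (Nat.ne_of_lt (pos1_lt_of_lt h (le_of_lt hi.1)))

lemma card_pF (x : List (Option Bool)) : (pF x).card = x.count none := by
  rw [pF, Finset.card_image_of_injOn (pos1_injOn x), card_vF]

lemma drop_pos1 (x : List (Option Bool)) (i : ℕ) :
    (ex1 x).drop (pos1 x i) = ex1 (x.drop i) := by
  have h : ex1 x = ex1 (x.take i) ++ ex1 (x.drop i) := by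
    rw [← ex1_append, List.take_append_drop]
  rw [pos1, h, List.drop_left]

lemma pF_subset_peakF (x : List (Option Bool)) : pF x ⊆ peakF (ex1 x) := by
  intro m hm
  obtain ⟨i, hiv, rfl⟩ := mem_pF.mp hm
  rw [mem_vF] at hiv
  obtain ⟨hilt, hinone⟩ := hiv
  rw [List.getElem?_eq_getElem hilt, Option.some_inj] at hinone
  have hdrop : (ex1 x).drop (pos1 x i) = [true, true, false] ++ ex1 (x.drop (i + 1)) := by
    rw [drop_pos1, List.drop_eq_getElem_cons hilt, ex1_cons, hinone]
    rfl
  rw [peakF, Finset.mem_filter, Finset.mem_range]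
  constructor
  · have h1 := congrArg List.length hdrop
    rw [List.length_drop, List.length_append] at h1
    simp only [List.length_cons, List.length_nil] at h1
    omega
  · rw [hdrop]
    exact List.prefix_append _ _

lemma mem_peakF {w : List Bool} {i : ℕ} :
    i ∈ peakF w ↔ i < w.length ∧ [true, true, false] <+: w.drop i := by
  rw [peakF, Finset.mem_filter, Finset.mem_range]

lemma blk_length_pos (c : Option Bool) : 1 ≤ (blk c).length := by
  cases c <;> simp [blk]

@[simp] lemma pos1_zero (x : List (Option Bool)) : pos1 x 0 = 0 := rfl

lemma pos1_cons_succ (a : Option Bool) (xs : List (Option Bool)) (i : ℕ) :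
    pos1 (a :: xs) (i + 1) = (blk a).length + pos1 xs i := by
  rw [pos1, pos1, List.take_succ_cons, ex1_cons, List.length_append]

lemma vF_cons_succ {a : Option Bool} {xs : List (Option Bool)} {i : ℕ} :
    i + 1 ∈ vF (a :: xs) ↔ i ∈ vF xs := by
  rw [mem_vF, mem_vF, List.length_cons, List.getElem?_cons_succ]
  constructor <;> rintro ⟨h1, h2⟩ <;> exact ⟨by omega, h2⟩

lemma vF_cons_zero {a : Option Bool} {xs : List (Option Bool)} :
    0 ∈ vF (a :: xs) ↔ a = none := by
  rw [mem_vF, List.getElem?_cons_zero]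
  simp

lemma mem_pF_cons {a : Option Bool} {xs : List (Option Bool)} {m : ℕ} :
    m ∈ pF (a :: xs) ↔ (m = 0 ∧ a = none) ∨
      ∃ m', m' ∈ pF xs ∧ m = (blk a).length + m' := by
  rw [mem_pF]
  constructor
  · rintro ⟨i, hiv, rfl⟩
    match i with
    | 0 => exact Or.inl ⟨rfl, vF_cons_zero.mp hiv⟩
    | i + 1 =>
      exact Or.inr ⟨pos1 xs i, mem_pF.mpr ⟨i, vF_cons_succ.mp hiv, rfl⟩,
        pos1_cons_succ a xs i⟩
  · rintro (⟨rfl, ha⟩ | ⟨m', hm', rfl⟩)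
    · exact ⟨0, vF_cons_zero.mpr ha, rfl⟩
    · obtain ⟨i, hiv, rfl⟩ := mem_pF.mp hm'
      exact ⟨i + 1, vF_cons_succ.mpr hiv, pos1_cons_succ a xs i⟩

lemma zero_mem_pF_cons {c : Option Bool} {zs : List (Option Bool)} :
    0 ∈ pF (c :: zs) ↔ c = none := by
  rw [mem_pF_cons]
  constructor
  · rintro (⟨-, h⟩ | ⟨m', -, hm⟩)
    · exact h
    · exfalso
      have := blk_length_pos c
      omega
  · intro h
    exact Or.inl ⟨rfl, h⟩

lemma mem_pF_cons_add {c : Option Bool} {zs : List (Option Bool)} {m : ℕ} :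
    (blk c).length + m ∈ pF (c :: zs) ↔ m ∈ pF zs := by
  rw [mem_pF_cons]
  constructor
  · rintro (⟨h0, -⟩ | ⟨m', hm', heq⟩)
    · exfalso
      have := blk_length_pos c
      omega
    · have : m = m' := by omega
      rwa [this]
  · intro h
    exact Or.inr ⟨m, h, rfl⟩

lemma ex1_pF_inj : ∀ x y : List (Option Bool), ex1 x = ex1 y → pF x = pF y → x = y := by
  intro x
  induction x with
  | nil =>
    intro y h _
    exact ((ex1_eq_nil_iff y).mp h.symm).symm
  | cons a xs ih =>
    intro y h hp
    match y with
    | [] =>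
      exact absurd ((ex1_eq_nil_iff (a :: xs)).mp h) (by simp)
    | b :: ys =>
      have hz : a = none ↔ b = none := by
        rw [← zero_mem_pF_cons (zs := xs), ← zero_mem_pF_cons (zs := ys), hp]
      have hab : a = b := by
        cases a with
        | none => exact (hz.mp rfl).symm
        | some a0 =>
          cases b with
          | none => exact absurd (hz.mpr rfl) (by simp)
          | some b0 =>
            rw [ex1_cons, ex1_cons] at h
            simp only [blk, List.cons_append, List.cons.injEq] at h
            rw [h.1]
      subst hab
      have htail : ex1 xs = ex1 ys := by
        rw [ex1_cons, ex1_cons] at h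
        exact List.append_cancel_left h
      have hptail : pF xs = pF ys := by
        ext m
        rw [← mem_pF_cons_add (c := a) (zs := xs), ← mem_pF_cons_add (c := a) (zs := ys), hp]
      rw [ih ys htail hptail]

lemma peakF_shift {c : Bool} {w' : List Bool} {s : ℕ}
    (h : s ∈ peakF (c :: w')) (h0 : s ≠ 0) : s - 1 ∈ peakF w' := by
  rw [mem_peakF] at h ⊢
  match s, h0 with
  | s + 1, _ =>
    rw [List.drop_succ_cons] at h
    simp only [List.length_cons] at h
    have hlen := h.2.length_le
    rw [List.length_drop] at hlen
    simp only [List.length_cons, List.length_nil] at hlen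
    exact ⟨by omega, by simpa using h.2⟩

lemma peak_ge_three {w' : List Bool} {s : ℕ}
    (h : s ∈ peakF (true :: true :: false :: w')) (h0 : s ≠ 0) : 3 ≤ s := by
  rw [mem_peakF] at h
  match s, h0 with
  | 1, _ =>
    exfalso
    have := h.2
    rw [List.drop_succ_cons, List.drop_zero] at this
    simp [List.cons_prefix_cons] at this
  | 2, _ =>
    exfalso
    have := h.2
    rw [List.drop_succ_cons, List.drop_succ_cons, List.drop_zero] at this
    simp [List.cons_prefix_cons] at this
  | s + 3, _ => omega

lemma exists_x : ∀ (N : ℕ) (w : List Bool) (S : Finset ℕ), w.length ≤ N → S ⊆ peakF w →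
    ∃ x, ex1 x = w ∧ pF x = S := by
  intro N
  induction N with
  | zero =>
    intro w S hw hS
    have hwnil : w = [] := List.eq_nil_of_length_eq_zero (by omega)
    subst hwnil
    refine ⟨[], rfl, ?_⟩
    have hSe : S = ∅ := by
      rw [Finset.eq_empty_iff_forall_notMem]
      intro m hm
      have := mem_peakF.mp (hS hm)
      simp at this
    rw [hSe]
    ext m
    rw [mem_pF]
    simp [mem_vF]
  | succ N ih =>
    intro w S hw hS
    by_cases h0 : 0 ∈ S
    · have hp : [true, true, false] <+: w := by
        have := mem_peakF.mp (hS h0)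
        simpa using this.2
      obtain ⟨w', rfl⟩ := hp
      have hge3 : ∀ s ∈ S, s ≠ 0 → 3 ≤ s := fun s hs hs0 =>
        peak_ge_three (by simpa using hS hs) hs0
      have hshift : ∀ s ∈ S, s ≠ 0 → s - 3 ∈ peakF w' := by
        intro s hs hs0
        have h3 := hge3 s hs hs0
        have h1 := peakF_shift (by simpa using hS hs) hs0
        have h2 := peakF_shift h1 (by omega)
        have h4 := peakF_shift h2 (by omega)
        simpa [show s - 1 - 1 - 1 = s - 3 by omega] using h4
      set S' := (S.erase 0).image (· - 3) with hS'
      have hsub' : S' ⊆ peakF w' := by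
        intro m hm
        obtain ⟨s, hs, rfl⟩ := Finset.mem_image.mp hm
        exact hshift s (Finset.mem_erase.mp hs).2 (Finset.mem_erase.mp hs).1
      have hlen' : w'.length ≤ N := by
        have := hw
        simp only [List.cons_append, List.length_cons, List.nil_append] at this ⊢
        omega
      obtain ⟨x', hx1, hx2⟩ := ih w' S' hlen' hsub'
      refine ⟨none :: x', by rw [ex1_cons, hx1]; rfl, ?_⟩
      ext m
      rw [mem_pF_cons]
      constructor
      · rintro (⟨rfl, -⟩ | ⟨m', hm', rfl⟩)
        · exact h0
        · rw [hx2, hS'] at hm'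
          obtain ⟨s, hs, rfl⟩ := Finset.mem_image.mp hm'
          have h3 := hge3 s (Finset.mem_erase.mp hs).2 (Finset.mem_erase.mp hs).1
          have heq : (blk none).length + (s - 3) = s := by
            simp only [blk, List.length_cons, List.length_nil]
            omega
          rw [heq]
          exact (Finset.mem_erase.mp hs).2
      · intro hm
        rcases eq_or_ne m 0 with rfl | hm0
        · exact Or.inl ⟨rfl, rfl⟩
        · refine Or.inr ⟨m - 3, ?_, ?_⟩
          · rw [hx2, hS']
            exact Finset.mem_image.mpr ⟨m, Finset.mem_erase.mpr ⟨hm0, hm⟩, rfl⟩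
          · have h3 := hge3 m hm hm0
            simp only [blk, List.length_cons, List.length_nil]
            omega
    · match w with
      | [] =>
        refine ⟨[], rfl, ?_⟩
        have hSe : S = ∅ := by
          rw [Finset.eq_empty_iff_forall_notMem]
          intro m hm
          have := mem_peakF.mp (hS hm)
          simp at this
        rw [hSe]
        ext m
        rw [mem_pF]
        simp [mem_vF]
      | c :: w' =>
        have hshift : ∀ s ∈ S, s - 1 ∈ peakF w' := fun s hs =>
          peakF_shift (hS hs) (fun h => h0 (h ▸ hs))
        set S' := S.image (· - 1) with hS'
        have hsub' : S' ⊆ peakF w' := by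
          intro m hm
          obtain ⟨s, hs, rfl⟩ := Finset.mem_image.mp hm
          exact hshift s hs
        have hlen' : w'.length ≤ N := by
          simp only [List.length_cons] at hw
          omega
        obtain ⟨x', hx1, hx2⟩ := ih w' S' hlen' hsub'
        refine ⟨some c :: x', by rw [ex1_cons, hx1]; rfl, ?_⟩
        ext m
        rw [mem_pF_cons]
        constructor
        · rintro (⟨rfl, hcon⟩ | ⟨m', hm', rfl⟩)
          · exact absurd hcon (by simp)
          · rw [hx2, hS'] at hm'
            obtain ⟨s, hs, rfl⟩ := Finset.mem_image.mp hm'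
            have hs1 : 1 ≤ s := by
              rcases Nat.eq_zero_or_pos s with rfl | h
              · exact absurd hs h0
              · exact h
            have heq : (blk (some c)).length + (s - 1) = s := by
              simp only [blk, List.length_singleton]
              omega
            rw [heq]
            exact hs
        · intro hm
          have hm1 : 1 ≤ m := by
            rcases Nat.eq_zero_or_pos m with rfl | h
            · exact absurd hm h0
            · exact h
          refine Or.inr ⟨m - 1, ?_, ?_⟩
          · rw [hx2, hS']
            exact Finset.mem_image.mpr ⟨m, hm, rfl⟩
          · simp only [blk, List.length_singleton]
            omega

lemma mem_uF {q : List Bool} {i : ℕ} :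
    i ∈ uF q ↔ i < q.length ∧ q[i]? = some true := by
  rw [uF, Finset.mem_filter, Finset.mem_range]

/-- The set of marked words: the short expansion is an elevated Dyck path of
semilength `k+1`, and there are exactly `j` marked letters. -/
noncomputable def XF (k j : ℕ) : Finset (List (Option Bool)) :=
  (allLists (Option Bool) (2 * k + 2)).filter
    (fun x => IsElevatedDyckPath k (ex2 x) ∧ x.count none = j)

lemma mem_XF {k j : ℕ} {x : List (Option Bool)} :
    x ∈ XF k j ↔ IsElevatedDyckPath k (ex2 x) ∧ x.count none = j := by
  rw [XF, Finset.mem_filter, mem_allLists]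
  constructor
  · rintro ⟨-, h⟩
    exact h
  · intro h
    refine ⟨?_, h⟩
    have := ((isElevated_iff k (ex2 x)).mp h.1).1
    rw [length_ex2] at this
    exact this

lemma ex2_vF_inj {x y : List (Option Bool)} (h2 : ex2 x = ex2 y) (hv : vF x = vF y) :
    x = y := by
  have hlen : x.length = y.length := by
    rw [← length_ex2 x, ← length_ex2 y, h2]
  apply List.ext_getElem?
  intro i
  rcases Nat.lt_or_ge i x.length with hi | hi
  · have hiy : i < y.length := by omega
    rw [List.getElem?_eq_getElem hi, List.getElem?_eq_getElem hiy]
    have hvi : x[i] = none ↔ y[i] = none := by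
      have hmx : i ∈ vF x ↔ x[i] = none := by
        rw [mem_vF, List.getElem?_eq_getElem hi]
        simp [hi]
      have hmy : i ∈ vF y ↔ y[i] = none := by
        rw [mem_vF, List.getElem?_eq_getElem hiy]
        simp [hiy]
      rw [← hmx, ← hmy, hv]
    have hmapeq : (ex2 x)[i]? = (ex2 y)[i]? := by rw [h2]
    rw [ex2, ex2, List.getElem?_map, List.getElem?_map, List.getElem?_eq_getElem hi,
      List.getElem?_eq_getElem hiy] at hmapeq
    simp only [Option.map_some] at hmapeq
    cases hx : x[i] with
    | none => rw [hvi.mp hx]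
    | some b =>
      cases hy : y[i] with
      | none => exact absurd (hvi.mpr hy) (by rw [hx]; simp)
      | some b' =>
        rw [hx, hy] at hmapeq
        simp only [Option.getD_some, Option.some_inj] at hmapeq
        rw [hmapeq]
  · rw [List.getElem?_eq_none (by omega), List.getElem?_eq_none (by omega)]

lemma cardX_B (k j : ℕ) :
    (XF k j).card = ((E k).sigma fun q => Finset.powersetCard j (uF q)).card := by
  apply Finset.card_bij (fun x _ => (⟨ex2 x, vF x⟩ : Σ _ : List Bool, Finset ℕ))
  · intro x hx
    rw [mem_XF] at hx
    rw [Finset.mem_sigma]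
    refine ⟨mem_E.mpr hx.1, Finset.mem_powersetCard.mpr ⟨?_, by rw [card_vF, hx.2]⟩⟩
    intro i hiv
    rw [mem_vF] at hiv
    rw [mem_uF]
    refine ⟨by rw [length_ex2]; exact hiv.1, ?_⟩
    rw [ex2, List.getElem?_map, List.getElem?_eq_getElem hiv.1]
    have : x[i] = none := by
      have := hiv.2
      rw [List.getElem?_eq_getElem hiv.1, Option.some_inj] at this
      exact this
    rw [this]
    rfl
  · intro x hx y hy heq
    exact ex2_vF_inj (congrArg Sigma.fst heq)
      (congrArg (fun s : Σ _ : List Bool, Finset ℕ => s.snd) heq)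
  · rintro ⟨q, T⟩ hqT
    rw [Finset.mem_sigma] at hqT
    obtain ⟨hq, hT⟩ := hqT
    rw [Finset.mem_powersetCard] at hT
    obtain ⟨hTsub, hTcard⟩ := hT
    classical
    set x : List (Option Bool) :=
      List.ofFn (fun i : Fin q.length => if (i : ℕ) ∈ T then none else some (q[(i : ℕ)])) with hxdef
    have hxlen : x.length = q.length := by rw [hxdef, List.length_ofFn]
    have hxget : ∀ i (hi : i < q.length),
        x[i]? = some (if i ∈ T then none else some (q[i])) := by
      intro i hi
      rw [hxdef, List.getElem?_ofFn]
      simp [List.ofFnNthVal, hi]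
    have hex2 : ex2 x = q := by
      apply List.ext_getElem?
      intro i
      rcases Nat.lt_or_ge i q.length with hi | hi
      · rw [ex2, List.getElem?_map, hxget i hi, List.getElem?_eq_getElem hi]
        by_cases hiT : i ∈ T
        · have := (mem_uF.mp (hTsub hiT)).2
          rw [List.getElem?_eq_getElem hi, Option.some_inj] at this
          simp [hiT, this]
        · simp [hiT]
      · rw [ex2, List.getElem?_map, List.getElem?_eq_none (by omega),
          List.getElem?_eq_none (by omega)]
        rfl
    have hvF : vF x = T := by
      ext i
      rw [mem_vF]
      constructor
      · rintro ⟨hilt, hival⟩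
        rw [hxlen] at hilt
        rw [hxget i hilt] at hival
        by_cases hiT : i ∈ T
        · exact hiT
        · simp [hiT] at hival
      · intro hiT
        have hilt : i < q.length := (mem_uF.mp (hTsub hiT)).1
        refine ⟨by omega, ?_⟩
        rw [hxget i hilt]
        simp [hiT]
    refine ⟨x, ?_, ?_⟩
    · rw [mem_XF, hex2]
      refine ⟨mem_E.mp hq, ?_⟩
      rw [← card_vF, hvF, hTcard]
    · rw [hex2, hvF]

lemma cardX_A (k j : ℕ) :
    (XF k j).card = ((E (k + j)).sigma fun w => Finset.powersetCard j (peakF w)).card := by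
  apply Finset.card_bij (fun x _ => (⟨ex1 x, pF x⟩ : Σ _ : List Bool, Finset ℕ))
  · intro x hx
    rw [mem_XF] at hx
    rw [Finset.mem_sigma]
    exact ⟨mem_E.mpr (elev_ex1 hx.1 hx.2),
      Finset.mem_powersetCard.mpr ⟨fun i hi => pF_subset_peakF x hi,
        by rw [card_pF, hx.2]⟩⟩
  · intro x hx y hy heq
    exact ex1_pF_inj x y (congrArg Sigma.fst heq)
      (congrArg (fun s : Σ _ : List Bool, Finset ℕ => s.snd) heq)
  · rintro ⟨w, S⟩ hwS
    rw [Finset.mem_sigma] at hwS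
    obtain ⟨hw, hS⟩ := hwS
    rw [Finset.mem_powersetCard] at hS
    obtain ⟨hSsub, hScard⟩ := hS
    obtain ⟨x, hx1, hx2⟩ := exists_x w.length w S le_rfl (fun i hi => hSsub hi)
    have hcnt : x.count none = j := by
      rw [← card_pF, hx2, hScard]
    have helev : IsElevatedDyckPath (k + j) (ex1 x) := by
      rw [hx1]
      exact mem_E.mp hw
    have h2 := elev_ex2 helev
    rw [hcnt] at h2
    have hk : k + j - j = k := by omega
    rw [hk] at h2
    refine ⟨x, mem_XF.mpr ⟨h2.2, hcnt⟩, by rw [hx1, hx2]⟩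

lemma upPeaks_le {n : ℕ} {w : List Bool} (h : IsElevatedDyckPath n w) :
    upPeaks w ≤ n := by
  obtain ⟨x, hx1, hx2⟩ := exists_x w.length w (peakF w) le_rfl (fun i hi => hi)
  have hcnt : x.count none = (peakF w).card := by rw [← card_pF, hx2]
  have hlen : w.length = x.length + 2 * x.count none := by rw [← hx1, length_ex1]
  have hcle : x.count none ≤ x.length := List.count_le_length
  have hwlen : w.length = 2 * n + 2 := ((isElevated_iff n w).mp h).1
  rw [upPeaks_eq_card]
  omega

end Marked

end SumUpPeaks

/-- For all `n ≥ 1` and `j ≥ 0`,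
`∑_{m ≥ j} binom(m, j) · g_{n,m} = binom(n−j+1, j) · C_{n−j}`,
where `g_{n,m}` counts elevated Dyck paths of length `2n+2` with exactly
`m` up-peaks (the sum is finite since `g n m = 0` for `m > 2n+2`). -/
theorem sum_upPeaks_eq (n j : ℕ) (hn : 1 ≤ n) :
    ∑ m ∈ Finset.Icc j (2 * n + 2), m.choose j * g n m =
      (n - j + 1).choose j * catalan (n - j) := by
  rcases le_or_gt j n with hj | hj
  · obtain ⟨k, rfl⟩ : ∃ k, n = k + j := ⟨n - j, by omega⟩
    rw [Nat.add_sub_cancel]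
    rw [SumUpPeaks.lhs_eq (k + j) j, ← SumUpPeaks.cardX_A k j, SumUpPeaks.cardX_B k j,
      SumUpPeaks.rhs_eq k j]
  · have hRHS : (n - j + 1).choose j = 0 := Nat.choose_eq_zero_of_lt (by omega)
    rw [hRHS, zero_mul]
    apply Finset.sum_eq_zero
    intro m hm
    rw [Finset.mem_Icc] at hm
    have hg : g n m = 0 := by
      rw [SumUpPeaks.g_eq, Finset.card_eq_zero, Finset.filter_eq_empty_iff]
      intro w hw heq
      have := SumUpPeaks.upPeaks_le (SumUpPeaks.mem_E.mp hw)
      omega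
    rw [hg, mul_zero]
end

section
/- For all integers n ≥ k ≥ 1, the following identity holds in ℤ[q]: ∑_{m=0}^{k−1} (−1)^m · binom(k−1, m) · binom(n−m, k) · q · (1−q)^{k−1−m} = ∑_{m=1}^{k} (−1)^{m−1} · binom(k−1, m−1) · binom(n−k+1, m) · q^m · (1−q)^{k−m}. -/
open Polynomial

lemma chooseAux (n k t : ℕ) (ht : t < k) (hkn : k ≤ n) :
    ∑ m ∈ Finset.Ico t k, (k-1).choose m * m.choose t * (n-k+1).choose (m+1)
      = (k-1).choose t * (n-t).choose k := by
  rw [Finset.sum_Ico_eq_sum_range]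
  have hstep : ∀ s ∈ Finset.range (k - t),
      (k-1).choose (t+s) * (t+s).choose t * (n-k+1).choose (t+s+1)
        = (k-1).choose t * ((k-1-t).choose s * (n-k+1).choose (t+s+1)) := by
    intro s hs
    rw [Finset.mem_range] at hs
    have h1 : t + s ≤ k - 1 := by omega
    have := Nat.choose_mul (n := k-1) (Nat.le_add_right t s)
    rw [this]
    have : t + s - t = s := by omega
    rw [this]; ring
  rw [Finset.sum_congr rfl hstep, ← Finset.mul_sum]
  congr 1
  have hnt : n - t = (k-1-t) + (n-k+1) := by omega
  rw [hnt, Nat.add_choose_eq, Finset.Nat.sum_antidiagonal_eq_sum_range_succ_mk]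
  rw [← Finset.sum_subset (Finset.range_subset_range.2 (by omega : k - t ≤ k + 1))
      (by intro i _ hi
          rw [Finset.mem_range, not_lt] at hi
          rw [Nat.choose_eq_zero_of_lt (by omega), Nat.zero_mul])]
  rw [← Finset.sum_range_reflect]
  apply Finset.sum_congr rfl
  intro s hs
  rw [Finset.mem_range] at hs
  have h2 : k - t - 1 - s = k - 1 - t - s := by omega
  rw [h2]
  have h5 : t + (k - 1 - t - s) + 1 = k - s := by omega
  rw [h5, Nat.choose_symm (by omega : s ≤ k - 1 - t)]

/-- For all integers `n ≥ k ≥ 1`, the identity in `ℤ[q]`: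
`∑_{m=0}^{k−1} (−1)^m·binom(k−1,m)·binom(n−m,k)·q·(1−q)^{k−1−m}
 = ∑_{m=1}^{k} (−1)^{m−1}·binom(k−1,m−1)·binom(n−k+1,m)·q^m·(1−q)^{k−m}`. -/
theorem alternating_binomial_poly_identity (n k : ℕ) (hk : 1 ≤ k) (hkn : k ≤ n) :
    ∑ m ∈ Finset.range k,
        (-1 : Polynomial ℤ) ^ m *
          Polynomial.C (((k - 1).choose m : ℤ) * ((n - m).choose k : ℤ)) *
          Polynomial.X * (1 - Polynomial.X) ^ (k - 1 - m) =
      ∑ m ∈ Finset.Icc 1 k,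
        (-1 : Polynomial ℤ) ^ (m - 1) *
          Polynomial.C (((k - 1).choose (m - 1) : ℤ) * ((n - k + 1).choose m : ℤ)) *
          Polynomial.X ^ m * (1 - Polynomial.X) ^ (k - m) := by
  classical
  set g : ℕ → ℕ → Polynomial ℤ := fun m j =>
    (-1 : Polynomial ℤ) ^ j *
      Polynomial.C (((k - 1).choose m : ℤ) * (m.choose j : ℤ) * ((n - k + 1).choose (m+1) : ℤ)) *
      Polynomial.X * (1 - Polynomial.X) ^ (k - 1 - j) with hg
  symm
  calc
    ∑ m ∈ Finset.Icc 1 k,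
        (-1 : Polynomial ℤ) ^ (m - 1) *
          Polynomial.C (((k - 1).choose (m - 1) : ℤ) * ((n - k + 1).choose m : ℤ)) *
          Polynomial.X ^ m * (1 - Polynomial.X) ^ (k - m)
      = ∑ m ∈ Finset.range k,
        (-1 : Polynomial ℤ) ^ m *
          Polynomial.C (((k - 1).choose m : ℤ) * ((n - k + 1).choose (m+1) : ℤ)) *
          Polynomial.X ^ (m+1) * (1 - Polynomial.X) ^ (k - 1 - m) := by
        rw [← Finset.Ico_add_one_right_eq_Icc, Finset.sum_Ico_eq_sum_range]
        apply Finset.sum_congr (by rw [Nat.add_sub_cancel])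
        intro m hm
        have e1 : 1 + m - 1 = m := by omega
        have e2 : k - (1 + m) = k - 1 - m := by omega
        rw [e1, e2, add_comm 1 m]
    _ = ∑ m ∈ Finset.range k, ∑ j ∈ Finset.range (m+1), g m j := by
        apply Finset.sum_congr rfl
        intro m hm
        rw [Finset.mem_range] at hm
        have hx : (Polynomial.X : Polynomial ℤ) ^ m
            = ∑ j ∈ Finset.range (m+1),
                (Polynomial.X - 1) ^ j * ((m.choose j : ℕ) : Polynomial ℤ) := by
          have h := add_pow (Polynomial.X - (1 : Polynomial ℤ)) 1 m
          rw [sub_add_cancel] at h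
          simpa using h
        rw [← Finset.sum_range_reflect]
        rw [pow_succ, hx]
        simp only [Finset.mul_sum, Finset.sum_mul]
        apply Finset.sum_congr rfl
        intro j hj
        rw [Finset.mem_range] at hj
        have hjm : j ≤ m := by omega
        simp only [hg, Nat.add_sub_cancel]
        have e1 : ((Polynomial.X : Polynomial ℤ) - 1) ^ j
            = (-1) ^ j * (1 - Polynomial.X) ^ j := by
          rw [← neg_sub (1 : Polynomial ℤ) Polynomial.X, neg_pow]
        have e2 : k - 1 - (m - j) = j + (k - 1 - m) := by omega
        have e3 : m.choose (m - j) = m.choose j := Nat.choose_symm hjm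
        have hsign : ((-1 : Polynomial ℤ)) ^ (m - j) = (-1) ^ m * (-1) ^ j := by
          conv_rhs => rw [show m = m - j + j from by omega]
          rw [pow_add, mul_assoc, ← pow_add, Even.neg_one_pow ⟨j, rfl⟩, mul_one]
        rw [e1, e2, e3, hsign, pow_add, ← Polynomial.C_eq_natCast (m.choose j)]
        simp only [map_mul]
        ring
    _ = ∑ j ∈ Finset.range k, ∑ m ∈ Finset.Ico j k, g m j := by
        simpa only [Finset.range_eq_Ico] using
          (Finset.sum_Ico_Ico_comm 0 k (fun j m => g m j)).symm
    _ = ∑ j ∈ Finset.range k,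
        (-1 : Polynomial ℤ) ^ j *
          Polynomial.C (((k - 1).choose j : ℤ) * ((n - j).choose k : ℤ)) *
          Polynomial.X * (1 - Polynomial.X) ^ (k - 1 - j) := by
        apply Finset.sum_congr rfl
        intro j hj
        rw [Finset.mem_range] at hj
        have key := congrArg (fun z : ℕ => (z : ℤ)) (chooseAux n k j hj hkn)
        push_cast at key
        simp only [hg]
        rw [show (∑ m ∈ Finset.Ico j k,
            (-1 : Polynomial ℤ) ^ j *
              Polynomial.C (((k - 1).choose m : ℤ) * (m.choose j : ℤ) * ((n - k + 1).choose (m+1) : ℤ)) *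
              Polynomial.X * (1 - Polynomial.X) ^ (k - 1 - j))
            = (-1 : Polynomial ℤ) ^ j *
              Polynomial.C (∑ m ∈ Finset.Ico j k,
                (((k - 1).choose m : ℤ) * (m.choose j : ℤ) * ((n - k + 1).choose (m+1) : ℤ))) *
              Polynomial.X * (1 - Polynomial.X) ^ (k - 1 - j) from by
          rw [map_sum, Finset.mul_sum, Finset.sum_mul, Finset.sum_mul]]
        congr 2
        push_cast
        rw [key]
end

section
/- For every integer n ≥ 1, the following identity holds in the field of rational functions ℚ(q): C_n(q) = ∑_{r=1}^{n} (−1)^{r−1} T_r(n,q), where T_r(n,q) = q^{r²−r} · ((−q^{n−r+1}; q)_r / (−q; q)_r) · [n−r+1 choose r]_q · C_{n−r}(q) (Andrews' q-analogue of Koshy's formula). -/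
/-- The q-integer `[n]_x = 1 + x + ⋯ + x^{n−1}` in `ℚ(q)` (with `[0]_x = 0`). -/
noncomputable def qInt (x : RatFunc ℚ) (n : ℕ) : RatFunc ℚ := ∑ i ∈ Finset.range n, x ^ i

/-- The q-factorial `[n]_x! = [1]_x[2]_x⋯[n]_x`. -/
noncomputable def qFact (x : RatFunc ℚ) (n : ℕ) : RatFunc ℚ := ∏ i ∈ Finset.range n, qInt x (i + 1)

/-- The Gaussian binomial coefficient `[m choose k]_x = [m]_x!/([k]_x![m−k]_x!)`
for `0 ≤ k ≤ m`, and `0` if `k > m`. -/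
noncomputable def qBinom (x : RatFunc ℚ) (m k : ℕ) : RatFunc ℚ :=
  if k ≤ m then qFact x m / (qFact x k * qFact x (m - k)) else 0

/-- The q-Pochhammer symbol `(a; x)_r = (1−a)(1−ax)⋯(1−ax^{r−1})`. -/
noncomputable def qPoch (x a : RatFunc ℚ) (r : ℕ) : RatFunc ℚ :=
  ∏ i ∈ Finset.range r, (1 - a * x ^ i)

/-- The q-Catalan number `C_n(q) = (1/[n+1]_q)·[2n choose n]_q`. -/
noncomputable def qCatalan (x : RatFunc ℚ) (n : ℕ) : RatFunc ℚ :=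
  (1 / qInt x (n + 1)) * qBinom x (2 * n) n

lemma aux_pow_sub_one_ne (m : ℕ) (hm : m ≠ 0) : (RatFunc.X : RatFunc ℚ) ^ m - 1 ≠ 0 := by
  intro h
  have h2 : (algebraMap (Polynomial ℚ) (RatFunc ℚ)) (Polynomial.X ^ m - 1) = 0 := by
    simpa [map_sub, map_pow, RatFunc.algebraMap_X] using h
  have h3 : (Polynomial.X ^ m - 1 : Polynomial ℚ) = 0 :=
    (map_eq_zero_iff _ (RatFunc.algebraMap_injective ℚ)).mp h2
  have h4 := congrArg (Polynomial.eval 0) h3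
  simp [zero_pow hm] at h4

lemma aux_one_add_pow_ne (m : ℕ) : (1 : RatFunc ℚ) + RatFunc.X ^ m ≠ 0 := by
  intro h
  have h2 : (algebraMap (Polynomial ℚ) (RatFunc ℚ)) (1 + Polynomial.X ^ m) = 0 := by
    simpa [map_add, map_pow, RatFunc.algebraMap_X] using h
  have h3 : (1 + Polynomial.X ^ m : Polynomial ℚ) = 0 :=
    (map_eq_zero_iff _ (RatFunc.algebraMap_injective ℚ)).mp h2
  have h4 := congrArg (Polynomial.eval 1) h3
  simp at h4

lemma aux_X_sub_one_ne : (RatFunc.X : RatFunc ℚ) - 1 ≠ 0 := by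
  simpa using aux_pow_sub_one_ne 1 one_ne_zero

lemma qInt_mul (m : ℕ) : qInt RatFunc.X m * (RatFunc.X - 1) = RatFunc.X ^ m - 1 := by
  simpa [qInt] using geom_sum_mul (RatFunc.X : RatFunc ℚ) m

lemma qInt_eq (m : ℕ) : qInt RatFunc.X m = (RatFunc.X ^ m - 1) / (RatFunc.X - 1) := by
  rw [eq_div_iff aux_X_sub_one_ne, qInt_mul]

lemma qInt_ne_zero (m : ℕ) (hm : m ≠ 0) : qInt RatFunc.X m ≠ 0 := by
  intro h
  have := qInt_mul m
  rw [h, zero_mul] at this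
  exact aux_pow_sub_one_ne m hm this.symm

lemma qFact_ne_zero (m : ℕ) : qFact RatFunc.X m ≠ 0 := by
  rw [qFact]
  exact Finset.prod_ne_zero_iff.mpr fun i _ => qInt_ne_zero (i+1) (by omega)

lemma qFact_succ (m : ℕ) : qFact RatFunc.X (m+1) = qFact RatFunc.X m * qInt RatFunc.X (m+1) :=
  Finset.prod_range_succ _ m

lemma qPoch_pow_eq (k r : ℕ) :
    qPoch RatFunc.X (-(RatFunc.X ^ k)) r = ∏ i ∈ Finset.range r, (1 + RatFunc.X ^ (k + i)) := by
  rw [qPoch]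
  exact Finset.prod_congr rfl fun i _ => by rw [pow_add]; ring

lemma qPoch_pow_ne (k r : ℕ) : qPoch RatFunc.X (-(RatFunc.X ^ k)) r ≠ 0 := by
  rw [qPoch_pow_eq]
  exact Finset.prod_ne_zero_iff.mpr fun i _ => aux_one_add_pow_ne (k+i)

lemma qPoch_negX_eq (r : ℕ) :
    qPoch RatFunc.X (-RatFunc.X) r = qPoch RatFunc.X (-(RatFunc.X ^ 1)) r := by
  rw [pow_one]

lemma qPoch_negX_ne (r : ℕ) : qPoch RatFunc.X (-RatFunc.X) r ≠ 0 := by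
  rw [qPoch_negX_eq]; exact qPoch_pow_ne 1 r

lemma qPoch_succ (k r : ℕ) : qPoch RatFunc.X (-(RatFunc.X ^ k)) (r+1)
    = (1 + RatFunc.X ^ k) * qPoch RatFunc.X (-(RatFunc.X ^ (k+1))) r := by
  rw [qPoch, Finset.prod_range_succ', qPoch]
  rw [mul_comm]
  congr 1
  · simp
  · exact Finset.prod_congr rfl fun i _ => by rw [pow_succ, pow_succ]; ring

lemma qPoch_negX_succ (r : ℕ) : qPoch RatFunc.X (-RatFunc.X) (r+1)
    = qPoch RatFunc.X (-RatFunc.X) r * (1 + RatFunc.X ^ (r+1)) := by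
  rw [qPoch, Finset.prod_range_succ, qPoch]
  congr 1
  rw [pow_succ']
  ring

lemma qCatalan_eq (m : ℕ) : qCatalan RatFunc.X m
    = qFact RatFunc.X (2*m) / (qInt RatFunc.X (m+1) * (qFact RatFunc.X m * qFact RatFunc.X m)) := by
  rw [qCatalan, qBinom, if_pos (by omega : m ≤ 2*m), show 2*m - m = m by omega]
  rw [div_mul_div_comm, one_mul]

noncomputable def U (n r : ℕ) : RatFunc ℚ :=
  (-1 : RatFunc ℚ) ^ r *
    (RatFunc.X ^ (r ^ 2 - r) *
      (qPoch RatFunc.X (-(RatFunc.X ^ (n - r + 1))) r / qPoch RatFunc.X (-RatFunc.X) r) *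
      qBinom RatFunc.X (n - r + 1) r * qCatalan RatFunc.X (n - r))

noncomputable def Cc (n r : ℕ) : RatFunc ℚ :=
  ((RatFunc.X ^ (2*r) - 1) * (RatFunc.X ^ (2*r) - RatFunc.X ^ (2*n+1))) /
    (RatFunc.X ^ (2*r) * (1 - RatFunc.X ^ n) * (1 - RatFunc.X ^ (n+1)))

noncomputable def Sf (n r : ℕ) : RatFunc ℚ := Cc n r * U n r

lemma U_zero (n : ℕ) : U n 0 = qCatalan RatFunc.X n := by
  rw [U]
  simp only [pow_zero, Nat.sub_zero, qPoch, Finset.range_zero, Finset.prod_empty]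
  rw [qBinom, if_pos (by omega : 0 ≤ n+1)]
  have h0 : qFact RatFunc.X 0 = 1 := by simp [qFact]
  rw [Nat.sub_zero, h0]
  rw [show (qFact RatFunc.X (n+1) / (1 * qFact RatFunc.X (n+1))) = 1 by
    rw [one_mul, div_self (qFact_ne_zero (n+1))]]
  ring

lemma U_vanish (n r : ℕ) (hn : 1 ≤ n) (h : n + 1 < 2*r) : U n r = 0 := by
  rw [U, qBinom, if_neg (by omega : ¬ r ≤ n - r + 1)]
  ring

lemma aux_one_sub_pow_ne (m : ℕ) (hm : m ≠ 0) : (1 : RatFunc ℚ) - RatFunc.X ^ m ≠ 0 := by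
  intro h
  apply aux_pow_sub_one_ne m hm
  linear_combination -h

lemma X_pow_ne (m : ℕ) : (RatFunc.X : RatFunc ℚ) ^ m ≠ 0 :=
  pow_ne_zero m RatFunc.X_ne_zero

lemma Cc_zero (n : ℕ) : Cc n 0 = 0 := by
  simp [Cc]

lemma Cc_even (r : ℕ) (hr : 1 ≤ r) : Cc (2*r) r = -1 := by
  rw [Cc]
  rw [div_eq_iff]
  · rw [show 2*(2*r)+1 = 2*r + (2*r + 1) by omega, pow_add,
        show (2*r+1 : ℕ) = 2*r + 1 from rfl, pow_add, pow_one]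
    ring
  · exact mul_ne_zero (mul_ne_zero (X_pow_ne _) (aux_one_sub_pow_ne _ (by omega)))
      (aux_one_sub_pow_ne _ (by omega))

lemma Cc_odd (m : ℕ) : Cc (2*m+1) (m+1) = -1 := by
  rw [Cc]
  rw [div_eq_iff]
  · rw [show 2*(m+1) = (2*m+1) + 1 by omega, show 2*(2*m+1)+1 = ((2*m+1) + 1) + (2*m+1) by omega]
    rw [pow_add, pow_add, pow_one]
    ring
  · exact mul_ne_zero (mul_ne_zero (X_pow_ne _) (aux_one_sub_pow_ne _ (by omega)))
      (aux_one_sub_pow_ne _ (by omega))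


set_option maxHeartbeats 8000000 in
lemma key (r t : ℕ) :
    U (2*r+1+t) r = Sf (2*r+1+t) (r+1) - Sf (2*r+1+t) r := by
  have hsq : (r+1)^2 - (r+1) = r^2 - r + 2*r := by
    have hr : r ≤ r^2 := Nat.le_self_pow (by norm_num) r
    have h1 : (r+1)^2 = r^2 + 2*r + 1 := by ring
    omega
  simp only [Sf, U, Cc, show 2*r+1+t - r = r+t+1 by omega,
    show 2*r+1+t - (r+1) = r+t by omega, hsq]
  rw [qBinom, if_pos (show r ≤ r+t+1+1 by omega), qBinom, if_pos (show r+1 ≤ r+t+1 by omega)]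
  simp only [show r+t+1+1 - r = t+1+1 by omega, show r+t+1 - (r+1) = t by omega]
  rw [qCatalan_eq (r+t+1), qCatalan_eq (r+t)]
  rw [qPoch_negX_succ r, qPoch_succ (r+t+1) r]
  rw [show 2*(r+t+1) = 2*(r+t)+1+1 by omega, qFact_succ (2*(r+t)+1), qFact_succ (2*(r+t)),
      qFact_succ (r+t+1), qFact_succ (r+t), qFact_succ (t+1), qFact_succ t, qFact_succ r]
  simp only [qInt_eq]
  have hx := aux_X_sub_one_ne
  have h1 := qFact_ne_zero r
  have h2 := qFact_ne_zero t
  have h3 := qFact_ne_zero (r+t)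
  have h4 := qFact_ne_zero (2*(r+t))
  have h5 := qPoch_negX_ne r
  have h6 := qPoch_pow_ne (r+t+1+1) r
  have h7 := aux_one_add_pow_ne (r+1)
  have h8 := aux_one_add_pow_ne (r+t+1)
  have e1 := aux_pow_sub_one_ne (r+1) (by omega)
  have e2 := aux_pow_sub_one_ne (t+1) (by omega)
  have e3 := aux_pow_sub_one_ne (t+1+1) (by omega)
  have e4 := aux_pow_sub_one_ne (r+t+1) (by omega)
  have e5 := aux_pow_sub_one_ne (r+t+1+1) (by omega)
  have e6 := aux_pow_sub_one_ne (2*(r+t)+1) (by omega)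
  have e7 := aux_pow_sub_one_ne (2*(r+t)+1+1) (by omega)
  have f1 := aux_one_sub_pow_ne (2*r+1+t) (by omega)
  have f2 := aux_one_sub_pow_ne (2*r+1+t+1) (by omega)
  have g1 := X_pow_ne (2*r)
  have g2 := X_pow_ne (2*(r+1))
  field_simp
  simp only [pow_succ]
  ring

lemma step (n r : ℕ) (hn : 1 ≤ n) : U n r = Sf n (r+1) - Sf n r := by
  rcases lt_or_ge (2*r+1) (n+1) with h | h
  · -- 2r+1 ≤ n
    obtain ⟨t, rfl⟩ : ∃ t, n = 2*r+1+t := ⟨n - (2*r+1), by omega⟩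
    exact key r t
  · rcases eq_or_lt_of_le h with h2 | h2
    · -- n + 1 = 2r + 1, i.e. n = 2r
      obtain rfl : n = 2*r := by omega
      have hr : 1 ≤ r := by omega
      have hz : U (2*r) (r+1) = 0 := U_vanish _ _ hn (by omega)
      rw [Sf, Sf, hz, mul_zero, Cc_even r hr]
      ring
    · rcases eq_or_lt_of_le (Nat.succ_le_of_lt h2) with h3 | h3
      · -- n + 2 = 2r+1, n = 2r - 1 odd : r = m+1, n = 2m+1
        obtain ⟨m, rfl⟩ : ∃ m, r = m + 1 := ⟨r - 1, by omega⟩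
        obtain rfl : n = 2*m+1 := by omega
        have hz : U (2*m+1) (m+1+1) = 0 := U_vanish _ _ hn (by omega)
        rw [Sf, Sf, hz, mul_zero, Cc_odd m]
        ring
      · -- 2r > n+1 : everything vanishes
        have hz1 : U n r = 0 := U_vanish _ _ hn (by omega)
        have hz2 : U n (r+1) = 0 := U_vanish _ _ hn (by omega)
        rw [Sf, Sf, hz1, hz2, mul_zero, mul_zero]
        ring

lemma sum_U (n : ℕ) (hn : 1 ≤ n) : ∑ r ∈ Finset.range (n+1), U n r = 0 := by
  have h1 : ∀ r ∈ Finset.range (n+1), U n r = Sf n (r+1) - Sf n r :=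
    fun r _ => step n r hn
  rw [Finset.sum_congr rfl h1, Finset.sum_range_sub (fun r => Sf n r)]
  have h2 : Sf n 0 = 0 := by rw [Sf, Cc_zero, zero_mul]
  have h3 : Sf n (n+1) = 0 := by
    rw [Sf, U_vanish n (n+1) hn (by omega), mul_zero]
  rw [h2, h3, sub_zero]

/-- **Andrews' q-analogue of Koshy's formula.** For every `n ≥ 1`, in `ℚ(q)`:
`C_n(q) = ∑_{r=1}^{n} (−1)^{r−1} T_r(n,q)` where
`T_r(n,q) = q^{r²−r}·((−q^{n−r+1};q)_r/(−q;q)_r)·[n−r+1 choose r]_q·C_{n−r}(q)`. -/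
theorem andrews_q_koshy (n : ℕ) (hn : 1 ≤ n) :
    qCatalan RatFunc.X n =
      ∑ r ∈ Finset.Icc 1 n,
        (-1 : RatFunc ℚ) ^ (r - 1) *
          (RatFunc.X ^ (r ^ 2 - r) *
            (qPoch RatFunc.X (-(RatFunc.X ^ (n - r + 1))) r / qPoch RatFunc.X (-RatFunc.X) r) *
            qBinom RatFunc.X (n - r + 1) r * qCatalan RatFunc.X (n - r)) := by
  have hsplit : Finset.range (n+1) = insert 0 (Finset.Icc 1 n) := by
    ext k
    simp only [Finset.mem_range, Finset.mem_insert, Finset.mem_Icc]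
    omega
  have h0 : (0 : ℕ) ∉ Finset.Icc 1 n := by simp
  have hsum := sum_U n hn
  rw [hsplit, Finset.sum_insert h0, U_zero] at hsum
  have hterm : ∀ r ∈ Finset.Icc 1 n,
      (-1 : RatFunc ℚ) ^ (r - 1) *
          (RatFunc.X ^ (r ^ 2 - r) *
            (qPoch RatFunc.X (-(RatFunc.X ^ (n - r + 1))) r / qPoch RatFunc.X (-RatFunc.X) r) *
            qBinom RatFunc.X (n - r + 1) r * qCatalan RatFunc.X (n - r)) = - U n r := by
    intro r hr
    rw [Finset.mem_Icc] at hr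
    obtain ⟨k, rfl⟩ : ∃ k, r = k + 1 := ⟨r - 1, by omega⟩
    rw [U, pow_succ]
    simp only [Nat.add_sub_cancel]
    ring
  rw [Finset.sum_congr rfl hterm, Finset.sum_neg_distrib]
  linear_combination hsum
end

section
/- For all integers 1 ≤ r ≤ n, the following identity holds in the field of rational functions ℚ(q): q^{r²−r} · ((−q^{n−r+1}; q)_r / (−q; q)_r) · [n−r+1 choose r]_q · C_{n−r}(q) = q^{r²−r} · (1/[n]_q) · [n choose r]_{q²} · [2n−2r choose n−1]_q. -/
open Finset

namespace TrAux

noncomputable def f (k : ℕ) : RatFunc ℚ := 1 - RatFunc.X ^ k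
noncomputable def F (m : ℕ) : RatFunc ℚ := ∏ i ∈ range m, f (i + 1)
noncomputable def G (m : ℕ) : RatFunc ℚ := ∏ i ∈ range m, f (2 * (i + 1))

lemma X_pow_ne_one {k : ℕ} (hk : 1 ≤ k) : (RatFunc.X : RatFunc ℚ) ^ k ≠ 1 := by
  intro h
  have h2 : (algebraMap (Polynomial ℚ) (RatFunc ℚ)) (Polynomial.X ^ k) =
      (algebraMap (Polynomial ℚ) (RatFunc ℚ)) 1 := by
    simpa [map_pow, RatFunc.algebraMap_X] using h
  have h3 := RatFunc.algebraMap_injective ℚ h2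
  have := congrArg Polynomial.natDegree h3
  simp [Polynomial.natDegree_X_pow] at this
  omega

lemma f_ne {k : ℕ} (hk : 1 ≤ k) : f k ≠ 0 := by
  simpa [f, sub_ne_zero] using fun h => X_pow_ne_one hk h.symm

lemma F_ne (m : ℕ) : F m ≠ 0 :=
  Finset.prod_ne_zero_iff.2 fun i _ => f_ne (by omega)

lemma G_ne (m : ℕ) : G m ≠ 0 :=
  Finset.prod_ne_zero_iff.2 fun i _ => f_ne (by omega)

lemma qInt_mul (x : RatFunc ℚ) (m : ℕ) : (1 - x) * qInt x m = 1 - x ^ m := by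
  have := geom_sum_mul x m
  unfold qInt
  linear_combination -this

lemma qInt_X_eq (m : ℕ) : qInt RatFunc.X m = f m / f 1 := by
  rw [eq_div_iff (f_ne le_rfl)]
  have := qInt_mul RatFunc.X m
  simp only [f, pow_one]
  linear_combination this

lemma qInt_X2_eq (m : ℕ) : qInt (RatFunc.X ^ 2) m = f (2 * m) / f 2 := by
  rw [eq_div_iff (f_ne (by omega))]
  have := qInt_mul (RatFunc.X ^ 2) m
  simp only [f, pow_one, ← pow_mul]
  rw [mul_comm 2 m] at *
  linear_combination this

lemma qFact_X_eq (m : ℕ) : qFact RatFunc.X m = F m / f 1 ^ m := by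
  unfold qFact F
  rw [Finset.prod_congr rfl fun i _ => qInt_X_eq (i + 1), Finset.prod_div_distrib,
    Finset.prod_const, Finset.card_range]

lemma qFact_X2_eq (m : ℕ) : qFact (RatFunc.X ^ 2) m = G m / f 2 ^ m := by
  unfold qFact G
  rw [Finset.prod_congr rfl fun i _ => qInt_X2_eq (i + 1), Finset.prod_div_distrib,
    Finset.prod_const, Finset.card_range]

lemma qBinom_X_eq {m k : ℕ} (h : k ≤ m) : qBinom RatFunc.X m k = F m / (F k * F (m - k)) := by
  rw [qBinom, if_pos h, qFact_X_eq, qFact_X_eq, qFact_X_eq]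
  have h1 : f 1 ≠ 0 := f_ne le_rfl
  have hp : f 1 ^ k * f 1 ^ (m - k) = f 1 ^ m := by rw [← pow_add]; congr 1; omega
  have h4 : f 1 ^ m ≠ 0 := pow_ne_zero _ h1
  field_simp [F_ne m, F_ne k, F_ne (m - k)]
  linear_combination hp

lemma qBinom_X2_eq {m k : ℕ} (h : k ≤ m) :
    qBinom (RatFunc.X ^ 2) m k = G m / (G k * G (m - k)) := by
  rw [qBinom, if_pos h, qFact_X2_eq, qFact_X2_eq, qFact_X2_eq]
  have h1 : f 2 ≠ 0 := f_ne (by omega)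
  have hp : f 2 ^ k * f 2 ^ (m - k) = f 2 ^ m := by rw [← pow_add]; congr 1; omega
  have h4 : f 2 ^ m ≠ 0 := pow_ne_zero _ h1
  field_simp [G_ne m, G_ne k, G_ne (m - k)]
  linear_combination hp

lemma one_add_eq {j : ℕ} (hj : 1 ≤ j) :
    1 + (RatFunc.X : RatFunc ℚ) ^ j = f (2 * j) / f j := by
  rw [eq_div_iff (f_ne hj)]
  have h2 : (RatFunc.X : RatFunc ℚ) ^ (2 * j) = (RatFunc.X ^ j) ^ 2 := by
    rw [mul_comm, pow_mul]
  simp only [f, h2]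
  ring

lemma poch_neg_X (r : ℕ) : qPoch RatFunc.X (-RatFunc.X) r = G r / F r := by
  unfold qPoch G F
  rw [← Finset.prod_div_distrib]
  refine Finset.prod_congr rfl fun i _ => ?_
  rw [← one_add_eq (by omega : 1 ≤ i + 1)]
  ring

lemma poch_gen (a r : ℕ) (ha : 1 ≤ a) :
    qPoch RatFunc.X (-(RatFunc.X ^ a)) r =
      (∏ i ∈ range r, f (2 * (a + i))) / (∏ i ∈ range r, f (a + i)) := by
  unfold qPoch
  rw [← Finset.prod_div_distrib]
  refine Finset.prod_congr rfl fun i _ => ?_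
  rw [← one_add_eq (by omega : 1 ≤ a + i), pow_add]
  ring

lemma F_add (m r : ℕ) : F (m + r) = F m * ∏ i ∈ range r, f (m + 1 + i) := by
  unfold F
  rw [Finset.prod_range_add]
  congr 1
  exact Finset.prod_congr rfl fun i _ => by rw [show m + i + 1 = m + 1 + i by omega]

lemma G_add (m r : ℕ) : G (m + r) = G m * ∏ i ∈ range r, f (2 * (m + 1 + i)) := by
  unfold G
  rw [Finset.prod_range_add]
  congr 1
  exact Finset.prod_congr rfl fun i _ => by rw [show m + i + 1 = m + 1 + i by omega]

lemma F_succ (k : ℕ) : F (k + 1) = F k * f (k + 1) := by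
  unfold F; rw [Finset.prod_range_succ]

end TrAux

open TrAux in
/-- For `1 ≤ r ≤ n`, in `ℚ(q)`:
`q^{r²−r}·((−q^{n−r+1};q)_r/(−q;q)_r)·[n−r+1 choose r]_q·C_{n−r}(q)
 = q^{r²−r}·(1/[n]_q)·[n choose r]_{q²}·[2n−2r choose n−1]_q`. -/
theorem Tr_simplification (n r : ℕ) (hr : 1 ≤ r) (hrn : r ≤ n) :
    RatFunc.X ^ (r ^ 2 - r) *
        (qPoch RatFunc.X (-(RatFunc.X ^ (n - r + 1))) r / qPoch RatFunc.X (-RatFunc.X) r) *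
        qBinom RatFunc.X (n - r + 1) r * qCatalan RatFunc.X (n - r) =
      RatFunc.X ^ (r ^ 2 - r) * (1 / qInt RatFunc.X n) *
        qBinom (RatFunc.X ^ 2) n r * qBinom RatFunc.X (2 * n - 2 * r) (n - 1) := by
  obtain ⟨m, rfl⟩ : ∃ m, n = m + r := ⟨n - r, by omega⟩
  rw [show m + r - r = m from by omega, show 2 * (m + r) - 2 * r = 2 * m from by omega,
    show m + r - 1 = m + r - 1 from rfl]
  by_cases hcase : r ≤ m + 1
  · -- generic case
    rw [poch_gen (m + 1) r (by omega), poch_neg_X, qBinom_X_eq hcase, qCatalan,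
      qBinom_X_eq (show m ≤ 2 * m by omega), qInt_X_eq, qInt_X_eq,
      qBinom_X2_eq (show r ≤ m + r by omega),
      qBinom_X_eq (show m + r - 1 ≤ 2 * m by omega),
      show 2 * m - m = m from by omega, show m + r - r = m from by omega,
      show 2 * m - (m + r - 1) = m + 1 - r from by omega]
    set p : RatFunc ℚ := ∏ i ∈ range r, f (m + 1 + i) with hpdef
    set pq : RatFunc ℚ := ∏ i ∈ range r, f (2 * (m + 1 + i)) with hpqdef
    have hFmr : F (m + r) = F m * p := F_add m r
    have hGmr : G (m + r) = G m * pq := G_add m r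
    have hFsucc : F (m + r) = F (m + r - 1) * f (m + r) := by
      have h5 : m + r - 1 + 1 = m + r := by omega
      conv_lhs => rw [← h5]
      rw [F_succ, h5]
    have hp : p = F (m + r - 1) * f (m + r) / F m := by
      rw [eq_div_iff (F_ne m)]
      linear_combination hFsucc - hFmr
    have hFm1 : F (m + 1) = F m * f (m + 1) := F_succ m
    rw [hGmr, hp, hFm1]
    have n1 : f 1 ≠ 0 := f_ne le_rfl
    have n2 : f (m + 1) ≠ 0 := f_ne (by omega)
    have n3 : f (m + r) ≠ 0 := f_ne (by omega)
    have na := F_ne m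
    have nb := F_ne r
    have nc := F_ne (m + 1 - r)
    have ne1 := F_ne (m + r - 1)
    have ng1 := G_ne m
    have ng2 := G_ne r
    set a := F m
    set b := F r
    set c := F (m + 1 - r)
    set d := F (2 * m)
    set e1 := F (m + r - 1)
    set g1 := G m
    set g2 := G r
    set u := f 1
    set v := f (m + 1)
    set w := f (m + r)
    field_simp
  · -- degenerate case: both binomials vanish
    rw [show qBinom RatFunc.X (m + 1) r = 0 from by rw [qBinom, if_neg (by omega)],
      show qBinom RatFunc.X (2 * m) (m + r - 1) = 0 from by rw [qBinom, if_neg (by omega)]]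
    ring
end

section
/- For all integers n ≥ 2 and r ≥ 0, the following identity holds in ℤ[q]: [n−1]_q · [n choose r]_{q²} · [2n−2r choose n−1]_q = [2n]_q · [n−1 choose r]_{q²} · [2n−2r−1 choose n−2]_q. -/
open Polynomial

/-- The q-integer `[n]_q = 1 + q + ⋯ + q^{n−1}` as a polynomial in `ℤ[q]`
(with `[0]_q = 0`). -/
noncomputable def qIntP (n : ℕ) : Polynomial ℤ := ∑ i ∈ Finset.range n, Polynomial.X ^ i

/-- The q-factorial `[n]_q! = [1]_q[2]_q⋯[n]_q` in `ℤ[q]`. -/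
noncomputable def qFactP (n : ℕ) : Polynomial ℤ := ∏ i ∈ Finset.range n, qIntP (i + 1)

/-- The Gaussian binomial coefficient `[m choose k]_q = [m]_q!/([k]_q![m−k]_q!)`
as a polynomial in `ℤ[q]` (the division, by a monic polynomial, is exact),
and `0` if `k > m`. -/
noncomputable def qBinomP (m k : ℕ) : Polynomial ℤ :=
  if k ≤ m then qFactP m /ₘ (qFactP k * qFactP (m - k)) else 0

/-- The Gaussian binomial coefficient `[m choose k]_{q²}`, i.e. `[m choose k]_q`
with `q` replaced by `q²`. -/
noncomputable def qBinomP2 (m k : ℕ) : Polynomial ℤ := (qBinomP m k).comp (Polynomial.X ^ 2)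


lemma qIntP_succ (m : ℕ) : qIntP (m + 1) = qIntP m + X ^ m := by
  simp [qIntP, Finset.sum_range_succ]
lemma qIntP_degree_lt (m : ℕ) : (qIntP m).degree < m := by
  induction m with
  | zero => simp [qIntP]
  | succ m ih =>
    rw [qIntP_succ]
    refine lt_of_le_of_lt (degree_add_le _ _) (max_lt (ih.trans ?_) ?_)
    · exact_mod_cast Nat.lt_succ_self m
    · rw [degree_X_pow]; exact_mod_cast Nat.lt_succ_self m
lemma qIntP_monic (m : ℕ) : (qIntP (m + 1)).Monic := by
  rw [qIntP_succ]
  exact Monic.add_of_right (monic_X_pow m) (by rw [degree_X_pow]; exact qIntP_degree_lt m)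
lemma qFactP_monic (n : ℕ) : (qFactP n).Monic :=
  monic_prod_of_monic _ _ fun i _ => qIntP_monic i
lemma qFactP_succ (n : ℕ) : qFactP (n + 1) = qFactP n * qIntP (n + 1) :=
  Finset.prod_range_succ _ _
lemma qIntP_add (a b : ℕ) : qIntP (a + b) = qIntP a + X ^ a * qIntP b := by
  rw [qIntP, qIntP, qIntP, Finset.sum_range_add, Finset.mul_sum]
  simp [pow_add]
lemma qFactP_eq_succ {k : ℕ} (h : 1 ≤ k) : qFactP k = qFactP (k - 1) * qIntP k := by
  conv_lhs => rw [show k = (k - 1) + 1 by omega, qFactP_succ]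
  rw [show k - 1 + 1 = k by omega]
lemma qFactP_mul_dvd : ∀ m k : ℕ, k ≤ m → qFactP k * qFactP (m - k) ∣ qFactP m := by
  intro m
  induction m with
  | zero => intro k hk; interval_cases k; simp [qFactP]
  | succ m ih =>
    intro k hk
    rcases Nat.eq_or_lt_of_le hk with h | h
    · subst h; simp [qFactP]
    rcases Nat.eq_zero_or_pos k with h0 | h0
    · subst h0; simp [qFactP]
    have hk' : k ≤ m := by omega
    have key : qIntP (m + 1) = qIntP k + X ^ k * qIntP (m + 1 - k) := by
      rw [← qIntP_add, show k + (m + 1 - k) = m + 1 by omega]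
    have d1 : qFactP (k - 1) * qFactP (m - (k - 1)) ∣ qFactP m := ih _ (by omega)
    have d2 : qFactP k * qFactP (m - k) ∣ qFactP m := ih _ hk'
    rw [qFactP_succ, key, mul_add]
    apply dvd_add
    · have e : qFactP k * qFactP (m + 1 - k) =
          (qFactP (k - 1) * qFactP (m - (k - 1))) * qIntP k := by
        rw [qFactP_eq_succ h0, show m - (k - 1) = m + 1 - k by omega]; ring
      rw [e]
      exact mul_dvd_mul d1 dvd_rfl
    · have e : qFactP k * qFactP (m + 1 - k) =
          (qFactP k * qFactP (m - k)) * qIntP (m + 1 - k) := by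
        rw [qFactP_eq_succ (show 1 ≤ m + 1 - k by omega),
          show m + 1 - k - 1 = m - k by omega]; ring
      rw [e, mul_comm (X ^ k) _, ← mul_assoc]
      exact dvd_mul_of_dvd_left (mul_dvd_mul d2 dvd_rfl) _
lemma qBinomP_mul {m k : ℕ} (h : k ≤ m) :
    qBinomP m k * (qFactP k * qFactP (m - k)) = qFactP m := by
  rw [qBinomP, if_pos h]
  have hm : (qFactP k * qFactP (m - k)).Monic := (qFactP_monic k).mul (qFactP_monic _)
  have hd := qFactP_mul_dvd m k h
  have h0 : qFactP m %ₘ (qFactP k * qFactP (m - k)) = 0 :=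
    (Polynomial.modByMonic_eq_zero_iff_dvd hm).mpr hd
  have h1 := Polynomial.modByMonic_add_div (qFactP m) (qFactP k * qFactP (m - k))
  rw [h0, zero_add] at h1
  rw [mul_comm]; exact h1
lemma qIntP_two_mul (m : ℕ) : qIntP (2 * m) = (qIntP m).comp (X ^ 2) * (1 + X) := by
  induction m with
  | zero => simp [qIntP]
  | succ m ih =>
    rw [show 2 * (m + 1) = 2 * m + 1 + 1 by ring, qIntP_succ, qIntP_succ, ih,
      qIntP_succ, add_comp, X_pow_comp]
    ring
lemma qFactP2_monic (k : ℕ) : ((qFactP k).comp (X ^ 2) : Polynomial ℤ).Monic :=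
  (qFactP_monic k).comp (monic_X_pow 2) (by simp)
lemma qBinomP2_mul {m k : ℕ} (h : k ≤ m) :
    qBinomP2 m k * ((qFactP k).comp (X ^ 2) * (qFactP (m - k)).comp (X ^ 2)) =
      (qFactP m).comp (X ^ 2) := by
  have := congrArg (fun p : Polynomial ℤ => p.comp (X ^ 2)) (qBinomP_mul h)
  simpa [qBinomP2, mul_comp] using this

/-- For `n ≥ 2` and `r ≥ 0`, the identity in `ℤ[q]`:
`[n−1]_q·[n choose r]_{q²}·[2n−2r choose n−1]_q
 = [2n]_q·[n−1 choose r]_{q²}·[2n−2r−1 choose n−2]_q`. -/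
theorem qint_qbinom_identity (n r : ℕ) (hn : 2 ≤ n) :
    qIntP (n - 1) * qBinomP2 n r * qBinomP (2 * n - 2 * r) (n - 1) =
      qIntP (2 * n) * qBinomP2 (n - 1) r * qBinomP (2 * n - 2 * r - 1) (n - 2) := by
  rcases le_or_gt (2 * r) (n + 1) with hA | hB
  · -- main case
    have hr : r ≤ n - 1 := by omega
    set t := n + 1 - 2 * r with ht
    have hD : ((qFactP r).comp (X ^ 2) * (qFactP (n - r)).comp (X ^ 2) * qFactP (n - 1) *
        qFactP t : Polynomial ℤ) ≠ 0 :=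
      ((((qFactP2_monic r).mul (qFactP2_monic (n - r))).mul (qFactP_monic (n - 1))).mul
        (qFactP_monic t)).ne_zero
    apply mul_right_cancel₀ hD
    have e1 := qBinomP2_mul (show r ≤ n by omega)
    have e3 := qBinomP2_mul (show r ≤ n - 1 from hr)
    have e2 : qBinomP (2 * n - 2 * r) (n - 1) * (qFactP (n - 1) * qFactP t) =
        qFactP (2 * n - 2 * r) := by
      have h3 := qBinomP_mul (show n - 1 ≤ 2 * n - 2 * r by omega)
      rwa [show 2 * n - 2 * r - (n - 1) = t by omega] at h3
    have e4 : qBinomP (2 * n - 2 * r - 1) (n - 2) * (qFactP (n - 2) * qFactP t) =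
        qFactP (2 * n - 2 * r - 1) := by
      have h4 := qBinomP_mul (show n - 2 ≤ 2 * n - 2 * r - 1 by omega)
      rwa [show 2 * n - 2 * r - 1 - (n - 2) = t by omega] at h4
    have e5 : ((qFactP (n - r)).comp (X ^ 2) : Polynomial ℤ) =
        (qFactP (n - 1 - r)).comp (X ^ 2) * (qIntP (n - r)).comp (X ^ 2) := by
      rw [qFactP_eq_succ (show 1 ≤ n - r by omega), mul_comp,
        show n - r - 1 = n - 1 - r by omega]
    have e6 : qFactP (n - 1) = qFactP (n - 2) * qIntP (n - 1) := by
      rw [qFactP_eq_succ (show 1 ≤ n - 1 by omega), show n - 1 - 1 = n - 2 by omega]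
    have e7 : ((qFactP n).comp (X ^ 2) : Polynomial ℤ) =
        (qFactP (n - 1)).comp (X ^ 2) * (qIntP n).comp (X ^ 2) := by
      conv_lhs => rw [qFactP_eq_succ (show 1 ≤ n by omega)]
      rw [mul_comp]
    have e8 : qFactP (2 * n - 2 * r) = qFactP (2 * n - 2 * r - 1) * qIntP (2 * n - 2 * r) :=
      qFactP_eq_succ (by omega)
    have e9 : qIntP (2 * n) = (qIntP n).comp (X ^ 2) * (1 + X) := qIntP_two_mul n
    have e10 : qIntP (2 * n - 2 * r) = (qIntP (n - r)).comp (X ^ 2) * (1 + X) := by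
      rw [show 2 * n - 2 * r = 2 * (n - r) by omega]; exact qIntP_two_mul _
    have hL : (qIntP (n - 1) * qBinomP2 n r * qBinomP (2 * n - 2 * r) (n - 1)) *
        ((qFactP r).comp (X ^ 2) * (qFactP (n - r)).comp (X ^ 2) * qFactP (n - 1) *
          qFactP t) =
        qIntP (n - 1) * (qFactP n).comp (X ^ 2) * qFactP (2 * n - 2 * r) := by
      rw [← e1, ← e2]; ring
    have hR : (qIntP (2 * n) * qBinomP2 (n - 1) r * qBinomP (2 * n - 2 * r - 1) (n - 2)) *
        ((qFactP r).comp (X ^ 2) * (qFactP (n - r)).comp (X ^ 2) * qFactP (n - 1) *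
          qFactP t) =
        qIntP (n - 1) * (qFactP n).comp (X ^ 2) * qFactP (2 * n - 2 * r) := by
      rw [e7, ← e3, e8, ← e4, e10, e9, e5, e6]; ring
    exact hL.trans hR.symm
  · -- degenerate case: both sides vanish
    have hL0 : qBinomP (2 * n - 2 * r) (n - 1) = 0 := by
      rw [qBinomP, if_neg (by omega)]
    rw [hL0, mul_zero]
    rcases le_or_gt r (n - 1) with h | h
    · have h0 : qBinomP (2 * n - 2 * r - 1) (n - 2) = 0 := by
        rw [qBinomP, if_neg (by omega)]
      rw [h0, mul_zero]
    · have h0 : qBinomP (n - 1) r = 0 := by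
        rw [qBinomP, if_neg (by omega)]
      rw [qBinomP2, h0, zero_comp, mul_zero, zero_mul]
end

section
/- For all integers 1 ≤ r ≤ n, the q-integer [n]_q divides the product [n choose r]_{q²} · [2n−2r choose n−1]_q in the polynomial ring ℤ[q]. (Equivalently, T_r(n,q) = q^{r²−r}·(1/[n]_q)·[n choose r]_{q²}·[2n−2r choose n−1]_q is a polynomial in q, answering Andrews' first question.) -/
open Polynomial

/-! ### Auxiliary lemmas -/

lemma qIntP_monic_s7 {n : ℕ} (hn : n ≠ 0) : (qIntP n).Monic := monic_geom_sum_X hn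

lemma qFactP_zero : qFactP 0 = 1 := rfl

lemma qFact_mul_dvd_aux : ∀ (N a b : ℕ), a + b ≤ N → qFactP a * qFactP b ∣ qFactP (a + b) := by
  intro N
  induction N with
  | zero =>
    intro a b h
    have h0 : a = 0 ∧ b = 0 := by omega
    simp [h0.1, h0.2, qFactP_zero]
  | succ N ih =>
    rintro (_ | a) (_ | b) h
    · simp [qFactP_zero]
    · simp [qFactP_zero]
    · simp [qFactP_zero]
    · have hab : a + 1 + (b + 1) = (a + 1 + b) + 1 := by omega
      have hstep : qFactP (a + 1 + (b + 1)) = qFactP (a + 1 + b) * qIntP (a + 1 + (b + 1)) := by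
        rw [hab]
        exact qFactP_succ _
      rw [hstep, qIntP_add (a + 1) (b + 1), mul_add]
      apply dvd_add
      · have h1 : qFactP a * qFactP (b + 1) ∣ qFactP (a + (b + 1)) := ih a (b + 1) (by omega)
        have h2' : a + (b + 1) = a + 1 + b := by omega
        rw [h2'] at h1
        calc qFactP (a + 1) * qFactP (b + 1)
            = (qFactP a * qFactP (b + 1)) * qIntP (a + 1) := by rw [qFactP_succ a]; ring
          _ ∣ qFactP (a + 1 + b) * qIntP (a + 1) := mul_dvd_mul h1 dvd_rfl
      · have h1 : qFactP (a + 1) * qFactP b ∣ qFactP (a + 1 + b) := ih (a + 1) b (by omega)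
        calc qFactP (a + 1) * qFactP (b + 1)
            = (qFactP (a + 1) * qFactP b) * qIntP (b + 1) := by rw [qFactP_succ b]; ring
          _ ∣ qFactP (a + 1 + b) * qIntP (b + 1) := mul_dvd_mul h1 dvd_rfl
          _ ∣ qFactP (a + 1 + b) * (X ^ (a + 1) * qIntP (b + 1)) := by
              rw [show qFactP (a + 1 + b) * (X ^ (a + 1) * qIntP (b + 1))
                  = (qFactP (a + 1 + b) * qIntP (b + 1)) * X ^ (a + 1) by ring]
              exact dvd_mul_right _ _

lemma qFact_mul_dvd {m k : ℕ} (hk : k ≤ m) : qFactP k * qFactP (m - k) ∣ qFactP m := by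
  have := qFact_mul_dvd_aux (k + (m - k)) k (m - k) le_rfl
  rwa [Nat.add_sub_cancel' hk] at this

lemma qBinom_spec {m k : ℕ} (hk : k ≤ m) :
    qFactP k * qFactP (m - k) * qBinomP m k = qFactP m := by
  obtain ⟨c, hc⟩ := qFact_mul_dvd hk
  rw [qBinomP, if_pos hk, hc,
    mul_divByMonic_cancel_left _ ((qFactP_monic k).mul (qFactP_monic (m - k)))]

lemma qBinom_ne_zero {m k : ℕ} (hk : k ≤ m) : qBinomP m k ≠ 0 := by
  intro h
  have := qBinom_spec hk
  rw [h, mul_zero] at this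
  exact (qFactP_monic m).ne_zero this.symm

/-! ### Root multiplicities over ℂ -/

section Complex

local notation "ι" => Int.castRingHom ℂ

lemma eval_qIntP_map (z : ℂ) (n : ℕ) :
    ((qIntP n).map ι).eval z = ∑ i ∈ Finset.range n, z ^ i := by
  simp [qIntP, Polynomial.map_sum, Polynomial.eval_finset_sum]

variable {ζ : ℂ} {d : ℕ} (hd : 2 ≤ d) (hζ : ∀ j, ζ ^ j = 1 ↔ d ∣ j)

include hd hζ in
lemma zeta_ne_one : ζ ≠ 1 := by
  intro h
  have h1 : d ∣ 1 := (hζ 1).mp (by rw [h, one_pow])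
  have := Nat.le_of_dvd one_pos h1
  omega

include hd hζ in
lemma rm_qIntP {j : ℕ} (hj : j ≠ 0) :
    rootMultiplicity ζ ((qIntP j).map ι) = if d ∣ j then 1 else 0 := by
  have hne : (qIntP j).map ι ≠ 0 := ((qIntP_monic_s7 hj).map ι).ne_zero
  have key : ((qIntP j).map ι).eval ζ * (ζ - 1) = ζ ^ j - 1 := by
    rw [eval_qIntP_map]; exact geom_sum_mul ζ j
  split_ifs with hdvd
  · -- root of multiplicity exactly 1
    have hroot : ((qIntP j).map ι).IsRoot ζ := by
      have h1 : ζ ^ j - 1 = 0 := by rw [(hζ j).mpr hdvd]; ring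
      have h2 : ζ - 1 ≠ 0 := sub_ne_zero.mpr (zeta_ne_one hd hζ)
      have := key
      rw [h1] at this
      exact (mul_eq_zero.mp this).resolve_right h2
    have h1 : 1 ≤ rootMultiplicity ζ ((qIntP j).map ι) :=
      (rootMultiplicity_pos hne).mpr hroot
    have h2 : rootMultiplicity ζ ((qIntP j).map ι) ≤ 1 := by
      -- qIntP j divides X^j - 1, which is separable over ℂ
      have hdvd2 : ((qIntP j).map ι) ∣ (X ^ j - 1 : ℂ[X]) := by
        refine ⟨(X - 1 : ℂ[X]), ?_⟩
        have : (qIntP j : ℤ[X]) * (X - 1) = X ^ j - 1 := geom_sum_mul X j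
        calc (X ^ j - 1 : ℂ[X]) = ((X ^ j - 1 : ℤ[X])).map ι := by simp
          _ = ((qIntP j * (X - 1) : ℤ[X])).map ι := by rw [this]
          _ = ((qIntP j).map ι) * (X - 1 : ℂ[X]) := by simp [Polynomial.map_mul]
      have hsep : (X ^ j - 1 : ℂ[X]).Separable := by
        have := separable_X_pow_sub_C (1 : ℂ) (by exact_mod_cast (Nat.cast_ne_zero (R := ℂ)).mpr hj) one_ne_zero
        simpa using this
      have hXj : (X ^ j - 1 : ℂ[X]) ≠ 0 := by
        intro h
        have := hsep
        rw [h] at this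
        exact not_separable_zero this
      have := rootMultiplicity_le_one_of_separable hsep ζ
      calc rootMultiplicity ζ ((qIntP j).map ι)
          ≤ rootMultiplicity ζ (X ^ j - 1 : ℂ[X]) := by
            rw [le_rootMultiplicity_iff hXj]
            exact dvd_trans (pow_rootMultiplicity_dvd _ _) hdvd2
        _ ≤ 1 := this
    omega
  · apply rootMultiplicity_eq_zero
    intro hroot
    have h1 : ζ ^ j - 1 = 0 := by rw [← key, hroot, zero_mul]
    exact hdvd ((hζ j).mp (by linear_combination h1))

include hd hζ in
lemma rm_qFactP (m : ℕ) : rootMultiplicity ζ ((qFactP m).map ι) = m / d := by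
  induction m with
  | zero =>
    simp [qFactP_zero, Polynomial.map_one]
  | succ m ihm =>
    rw [qFactP_succ, Polynomial.map_mul, rootMultiplicity_mul, ihm,
      rm_qIntP hd hζ (Nat.succ_ne_zero m), Nat.succ_div]
    exact mul_ne_zero ((qFactP_monic m).map ι).ne_zero
      ((qIntP_monic_s7 (Nat.succ_ne_zero m)).map ι).ne_zero

include hd hζ in
lemma eval_qBinom_map_zero {m k : ℕ} (hk : k ≤ m)
    (hcarry : k / d + (m - k) / d < m / d) :
    ((qBinomP m k).map ι).eval ζ = 0 := by
  have hspec := congrArg (Polynomial.map ι) (qBinom_spec hk)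
  rw [Polynomial.map_mul, Polynomial.map_mul] at hspec
  have hB : (qBinomP m k).map ι ≠ 0 :=
    (Polynomial.map_ne_zero_iff (Int.cast_injective (α := ℂ))).mpr (qBinom_ne_zero hk)
  have h1 : rootMultiplicity ζ (((qFactP k).map ι * (qFactP (m - k)).map ι) * ((qBinomP m k).map ι))
      = m / d := by rw [hspec]; exact rm_qFactP hd hζ m
  rw [rootMultiplicity_mul (by
        refine mul_ne_zero (mul_ne_zero ?_ ?_) hB <;> exact ((qFactP_monic _).map ι).ne_zero),
    rootMultiplicity_mul (by
        refine mul_ne_zero ?_ ?_ <;> exact ((qFactP_monic _).map ι).ne_zero),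
    rm_qFactP hd hζ, rm_qFactP hd hζ] at h1
  have : 0 < rootMultiplicity ζ ((qBinomP m k).map ι) := by omega
  exact (rootMultiplicity_pos hB).mp this

end Complex

/-! ### Carry lemmas -/

lemma carry1 {d n r : ℕ} (hdn : d ∣ n) (hdr : ¬ d ∣ r) (hrn : r ≤ n) :
    r / d + (n - r) / d < n / d := by
  have hd : 0 < d := by
    rcases Nat.eq_zero_or_pos d with h | h
    · exfalso
      subst h
      rw [Nat.zero_dvd] at hdn
      subst hdn
      exact hdr (Nat.zero_dvd.mpr (by omega))
    · exact h
  have h1 : r + (n - r) = n := by omega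
  obtain ⟨q, hq⟩ := hdn
  have hnmod : n % d = 0 := by simp [hq, Nat.mul_mod_right]
  have h3 : r % d ≠ 0 := fun h => hdr (Nat.dvd_of_mod_eq_zero h)
  have h4 : r % d < d := Nat.mod_lt _ hd
  have h5 : (n - r) % d < d := Nat.mod_lt _ hd
  have h6 : d ≤ r % d + (n - r) % d := by
    by_contra hlt
    push_neg at hlt
    have h2 : (r % d + (n - r) % d) % d = 0 := by
      rw [← Nat.add_mod, h1, hnmod]
    rw [Nat.mod_eq_of_lt hlt] at h2
    omega
  have hdiv := Nat.add_div (a := r) (b := n - r) hd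
  rw [h1, if_pos h6] at hdiv
  omega

lemma carry2 {d n r : ℕ} (hd : 2 ≤ d) (hdn : d ∣ n) (hd2r : d ∣ 2 * r) (hr : 1 ≤ r)
    (h2r : 2 * r ≤ n) :
    (n - 1) / d + (2 * n - 2 * r - (n - 1)) / d < (2 * n - 2 * r) / d := by
  have hd0 : 0 < d := by omega
  have hn : d ≤ n := Nat.le_of_dvd (by omega) hdn
  obtain ⟨q, hq⟩ := hdn
  have hq1 : 1 ≤ q := by
    rcases Nat.eq_zero_or_pos q with h | h
    · rw [h, Nat.mul_zero] at hq
      omega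
    · exact h
  have hqq : d * q = d * (q - 1) + d := by
    conv_lhs => rw [show q = (q - 1) + 1 by omega]
    rw [Nat.mul_add, Nat.mul_one]
  have hamod : (n - 1) % d = d - 1 := by
    have ha : n - 1 = d * (q - 1) + (d - 1) := by omega
    rw [ha, Nat.mul_add_mod, Nat.mod_eq_of_lt (by omega)]
  obtain ⟨s, hs⟩ : d ∣ n - 2 * r := Nat.dvd_sub ⟨q, hq⟩ hd2r
  have hb : 2 * n - 2 * r - (n - 1) = d * s + 1 := by omega
  have hbmod : (2 * n - 2 * r - (n - 1)) % d = 1 := by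
    rw [hb, Nat.mul_add_mod, Nat.mod_eq_of_lt (by omega)]
  have hsum : (n - 1) + (2 * n - 2 * r - (n - 1)) = 2 * n - 2 * r := by omega
  have hdiv := Nat.add_div (a := n - 1) (b := 2 * n - 2 * r - (n - 1)) hd0
  rw [hsum, hamod, hbmod, if_pos (by omega)] at hdiv
  omega

/-- For `1 ≤ r ≤ n`, the q-integer `[n]_q` divides
`[n choose r]_{q²}·[2n−2r choose n−1]_q` in `ℤ[q]`; equivalently,
`T_r(n,q) = q^{r²−r}·(1/[n]_q)·[n choose r]_{q²}·[2n−2r choose n−1]_q` is a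
polynomial in `q` (Andrews' first question). -/
theorem qIntP_dvd_Tr (n r : ℕ) (hr : 1 ≤ r) (hrn : r ≤ n) :
    qIntP n ∣ qBinomP2 n r * qBinomP (2 * n - 2 * r) (n - 1) := by
  by_cases hcase : 2 * r ≤ n + 1
  case neg =>
    have h0 : qBinomP (2 * n - 2 * r) (n - 1) = 0 := by
      rw [qBinomP, if_neg (by omega)]
    rw [h0, mul_zero]
    exact dvd_zero _
  have hn0 : n ≠ 0 := by omega
  by_cases hP0 : qBinomP2 n r * qBinomP (2 * n - 2 * r) (n - 1) = 0
  · rw [hP0]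
    exact dvd_zero _
  rw [← Polynomial.map_dvd_map (Int.castRingHom ℂ) Int.cast_injective (qIntP_monic_s7 hn0)]
  have hg : (qIntP n).map (Int.castRingHom ℂ) ≠ 0 :=
    ((qIntP_monic_s7 hn0).map (Int.castRingHom ℂ)).ne_zero
  have hPm : (qBinomP2 n r * qBinomP (2 * n - 2 * r) (n - 1)).map (Int.castRingHom ℂ) ≠ 0 :=
    (Polynomial.map_ne_zero_iff Int.cast_injective).mpr hP0
  -- every root of (qIntP n).map is a root of the product
  have key : ∀ ζ : ℂ, ((qIntP n).map (Int.castRingHom ℂ)).IsRoot ζ →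
      ((qBinomP2 n r * qBinomP (2 * n - 2 * r) (n - 1)).map (Int.castRingHom ℂ)).IsRoot ζ := by
    intro ζ hroot
    have hgeom : (∑ i ∈ Finset.range n, ζ ^ i) * (ζ - 1) = ζ ^ n - 1 := geom_sum_mul ζ n
    have hev : (∑ i ∈ Finset.range n, ζ ^ i) = 0 := by
      have h := hroot
      rwa [IsRoot, eval_qIntP_map] at h
    have hζn : ζ ^ n = 1 := by
      have h : (0 : ℂ) = ζ ^ n - 1 := by rw [← hgeom, hev, zero_mul]
      linear_combination -h
    have hζ1 : ζ ≠ 1 := by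
      intro h
      rw [h] at hev
      simp at hev
      exact hn0 hev
    have hfin : IsOfFinOrder ζ := isOfFinOrder_iff_pow_eq_one.mpr ⟨n, by omega, hζn⟩
    have hζ : ∀ j, ζ ^ j = 1 ↔ orderOf ζ ∣ j := fun j =>
      ⟨fun h => orderOf_dvd_of_pow_eq_one h, fun h => orderOf_dvd_iff_pow_eq_one.mp h⟩
    set d := orderOf ζ with hdd
    have hdn : d ∣ n := (hζ n).mp hζn
    have hd1 : d ≠ 1 := fun h => hζ1 (orderOf_eq_one_iff.mp h)
    have hd0 : 0 < d := hfin.orderOf_pos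
    have hd : 2 ≤ d := by omega
    obtain ⟨e, he_pos, hζ2, hedvd, h2r_of⟩ :
        ∃ e : ℕ, 0 < e ∧ (∀ j, (ζ ^ 2) ^ j = 1 ↔ e ∣ j) ∧ e ∣ d ∧ (e ∣ r → d ∣ 2 * r) := by
      rcases Nat.even_or_odd d with ⟨t, ht⟩ | hodd
      · refine ⟨t, by omega, ?_, ⟨2, by omega⟩, ?_⟩
        · intro j
          rw [← pow_mul, hζ (2 * j), ht, show t + t = 2 * t by ring]
          exact Nat.mul_dvd_mul_iff_left (by norm_num : (0:ℕ) < 2)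
        · intro h
          rw [ht, show t + t = 2 * t by ring]
          exact mul_dvd_mul_left 2 h
      · refine ⟨d, hd0, ?_, dvd_rfl, fun h => Dvd.dvd.mul_left h 2⟩
        intro j
        rw [← pow_mul, hζ (2 * j)]
        constructor
        · intro h
          exact (Nat.Coprime.dvd_of_dvd_mul_left (hodd.coprime_two_right) h)
        · intro h
          exact Dvd.dvd.mul_left h 2
    rw [Polynomial.map_mul, IsRoot, eval_mul]
    by_cases her : e ∣ r
    · -- the second factor vanishes at ζ
      have hd2r : d ∣ 2 * r := h2r_of her
      have h2rn : 2 * r ≤ n := by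
        by_contra hcon
        have h1 : 2 * r = n + 1 := by omega
        have h2 : d ∣ 2 * r - n := Nat.dvd_sub hd2r hdn
        rw [h1, Nat.add_sub_cancel_left] at h2
        exact absurd (Nat.le_of_dvd one_pos h2) (by omega)
      have hk : n - 1 ≤ 2 * n - 2 * r := by omega
      have hz : ((qBinomP (2 * n - 2 * r) (n - 1)).map (Int.castRingHom ℂ)).eval ζ = 0 :=
        eval_qBinom_map_zero hd hζ hk (carry2 hd hdn hd2r hr h2rn)
      rw [hz, mul_zero]
    · -- the first factor vanishes at ζ
      have he2 : 2 ≤ e := by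
        by_contra h
        have he1 : e = 1 := by omega
        exact her (by rw [he1]; exact one_dvd r)
      have hen : e ∣ n := hedvd.trans hdn
      have hz : ((qBinomP n r).map (Int.castRingHom ℂ)).eval (ζ ^ 2) = 0 :=
        eval_qBinom_map_zero he2 hζ2 hrn (carry1 hen her hrn)
      have hz2 : ((qBinomP2 n r).map (Int.castRingHom ℂ)).eval ζ = 0 := by
        rw [qBinomP2, Polynomial.map_comp, Polynomial.map_pow, Polynomial.map_X, eval_comp,
          eval_pow, eval_X]
        exact hz
      rw [hz2, zero_mul]
  -- assemble
  apply Splits.dvd_of_roots_le_roots (IsAlgClosed.splits _) hg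
  have hsep : ((qIntP n).map (Int.castRingHom ℂ)).Separable := by
    have hXn : (X ^ n - 1 : ℂ[X]).Separable := by
      have h := separable_X_pow_sub_C (1 : ℂ) (by exact_mod_cast (Nat.cast_ne_zero (R := ℂ)).mpr hn0) one_ne_zero
      simpa using h
    apply hXn.of_dvd
    refine ⟨(X - 1 : ℂ[X]), ?_⟩
    have h : (qIntP n : ℤ[X]) * (X - 1) = X ^ n - 1 := geom_sum_mul X n
    calc (X ^ n - 1 : ℂ[X]) = ((X ^ n - 1 : ℤ[X])).map (Int.castRingHom ℂ) := by simp
      _ = ((qIntP n * (X - 1) : ℤ[X])).map (Int.castRingHom ℂ) := by rw [h]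
      _ = ((qIntP n).map (Int.castRingHom ℂ)) * (X - 1 : ℂ[X]) := by simp [Polynomial.map_mul]
  rw [Multiset.le_iff_count]
  intro ζ
  rw [count_roots, count_roots]
  rcases Nat.eq_zero_or_pos (rootMultiplicity ζ ((qIntP n).map (Int.castRingHom ℂ))) with h | h
  · rw [h]
    exact Nat.zero_le _
  · have hroot := (rootMultiplicity_pos hg).mp h
    have h1 : rootMultiplicity ζ ((qIntP n).map (Int.castRingHom ℂ)) ≤ 1 :=
      rootMultiplicity_le_one_of_separable hsep ζ
    have h2 : 1 ≤ rootMultiplicity ζ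
        ((qBinomP2 n r * qBinomP (2 * n - 2 * r) (n - 1)).map (Int.castRingHom ℂ)) :=
      (rootMultiplicity_pos hPm).mpr (key ζ hroot)
    omega
end

section
/- For every integer r ≥ 1, the following identity holds in the field of rational functions ℚ(q): substituting q ↦ −q in q^{r²−r} · [2r−1 choose r]_{q²} / [2r−1]_q yields q^{r²−r} · [2r−1]_q · C_{r−1}(q²); in particular T_r(2r−1,−q) = q^{r²−r}·[2r−1]_q·C_{r−1}(q²) is a polynomial with only nonnegative coefficients. -/
open Polynomial

/-- The q-Catalan number `C_n(q) = (1/[n+1]_q)·[2n choose n]_q` as a polynomial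
in `ℤ[q]` (the division, by a monic polynomial, is exact). -/
noncomputable def qCatalanP (n : ℕ) : Polynomial ℤ := qBinomP (2 * n) n /ₘ qIntP (n + 1)

namespace QAux

/-! ### basic lemmas on `qIntP` and `qFactP` -/

lemma qIntP_zero : qIntP 0 = 0 := by simp [qIntP]

lemma qIntP_one : qIntP 1 = 1 := by simp [qIntP]

lemma qIntP_succ (n : ℕ) : qIntP (n + 1) = qIntP n + X ^ n := by
  simp [qIntP, Finset.sum_range_succ]

lemma qIntP_add (a b : ℕ) : qIntP (a + b) = qIntP a + X ^ a * qIntP b := by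
  induction b with
  | zero => simp [qIntP]
  | succ b ih =>
      rw [← Nat.add_assoc, qIntP_succ, ih, qIntP_succ, pow_add]
      ring

lemma qIntP_one_add (a : ℕ) : qIntP (1 + a) = 1 + X * qIntP a := by
  rw [qIntP_add, qIntP_one, pow_one]

lemma qIntP_coeff (n i : ℕ) : (qIntP n).coeff i = if i < n then 1 else 0 := by
  rw [qIntP, finset_sum_coeff]
  simp only [coeff_X_pow]
  rw [Finset.sum_ite_eq (Finset.range n) i (fun _ => (1:ℤ))]
  simp

lemma qIntP_degree_lt (n : ℕ) : (qIntP n).degree < n := by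
  rw [qIntP]
  apply lt_of_le_of_lt (degree_sum_le _ _)
  rw [Finset.sup_lt_iff]
  · intro i hi
    exact lt_of_le_of_lt (degree_X_pow_le i) (by exact_mod_cast Finset.mem_range.mp hi)
  · exact_mod_cast WithBot.bot_lt_coe n

lemma qIntP_monic (n : ℕ) : (qIntP (n + 1)).Monic := by
  rw [qIntP_succ, add_comm]
  exact monic_X_pow_add (qIntP_degree_lt n)

lemma qIntP_ne_zero {n : ℕ} (h : n ≠ 0) : qIntP n ≠ 0 := by
  obtain ⟨m, rfl⟩ : ∃ m, n = m + 1 := ⟨n - 1, by omega⟩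
  exact (qIntP_monic m).ne_zero

lemma qFactP_zero : qFactP 0 = 1 := by simp [qFactP]

lemma qFactP_succ (n : ℕ) : qFactP (n + 1) = qFactP n * qIntP (n + 1) := by
  simp [qFactP, Finset.prod_range_succ]

lemma qFactP_monic (n : ℕ) : (qFactP n).Monic :=
  monic_prod_of_monic _ _ fun i _ => qIntP_monic i

lemma qFactP_ne_zero (n : ℕ) : qFactP n ≠ 0 := (qFactP_monic n).ne_zero

/-! ### the Gaussian binomial via the q-Pascal recursion -/

noncomputable def gb : ℕ → ℕ → Polynomial ℤ
  | _, 0 => 1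
  | 0, _ + 1 => 0
  | m + 1, k + 1 => gb m k + X ^ (k + 1) * gb m (k + 1)

@[simp] lemma gb_right_zero (m : ℕ) : gb m 0 = 1 := by cases m <;> rfl

@[simp] lemma gb_zero_succ (k : ℕ) : gb 0 (k + 1) = 0 := rfl

lemma gb_succ_succ (m k : ℕ) :
    gb (m + 1) (k + 1) = gb m k + X ^ (k + 1) * gb m (k + 1) := rfl

lemma gb_eq_zero : ∀ m k, m < k → gb m k = 0 := by
  intro m
  induction m with
  | zero => intro k hk; obtain ⟨j, rfl⟩ : ∃ j, k = j + 1 := ⟨k - 1, by omega⟩; rfl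
  | succ m ih =>
      intro k hk
      obtain ⟨j, rfl⟩ : ∃ j, k = j + 1 := ⟨k - 1, by omega⟩
      rw [gb_succ_succ, ih j (by omega), ih (j+1) (by omega)]
      ring

lemma gb_mul_fact : ∀ m k, k ≤ m → gb m k * (qFactP k * qFactP (m - k)) = qFactP m := by
  intro m
  induction m with
  | zero => intro k hk; interval_cases k; simp [qFactP]
  | succ m ih =>
      intro k hk
      rcases k with _ | k
      · simp [qFactP]
      · rw [gb_succ_succ]
        rcases Nat.lt_or_ge k m with hkm | hkm
        · obtain ⟨d, rfl⟩ : ∃ d, m = k + d + 1 := ⟨m - k - 1, by omega⟩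
          have h1 := ih k (by omega)
          have h2 := ih (k+1) (by omega)
          have e1 : k + d + 1 - k = d + 1 := by omega
          have e2 : k + d + 1 - (k + 1) = d := by omega
          rw [e1] at h1; rw [e2] at h2
          have e3 : k + d + 1 + 1 - (k + 1) = d + 1 := by omega
          rw [e3]
          have e4 : qFactP (k + d + 1 + 1) = qFactP (k + d + 1) * qIntP (k + d + 2) :=
            qFactP_succ _
          have e5 : qIntP (k + d + 2) = qIntP (k + 1) + X ^ (k+1) * qIntP (d + 1) := by
            have := qIntP_add (k+1) (d+1)
            rw [show k + 1 + (d+1) = k + d + 2 by omega] at this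
            exact this
          rw [e4, e5, qFactP_succ k, qFactP_succ d]
          rw [qFactP_succ d] at h1
          rw [qFactP_succ k] at h2
          linear_combination (qIntP (k+1)) * h1 + (X ^ (k+1) * qIntP (d+1)) * h2
        · have hk' : k = m := by omega
          subst hk'
          have h1 := ih k (le_refl k)
          rw [Nat.sub_self] at h1
          rw [gb_eq_zero k (k+1) (by omega), Nat.sub_self]
          rw [qFactP_succ k]
          simp [qFactP] at h1 ⊢
          linear_combination (qIntP (k+1)) * h1

lemma gb_symm {m k : ℕ} (h : k ≤ m) : gb m k = gb m (m - k) := by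
  have h1 := gb_mul_fact m k h
  have h2 := gb_mul_fact m (m - k) (by omega)
  rw [show m - (m - k) = k by omega] at h2
  have h3 := h1.trans h2.symm
  rw [mul_comm (qFactP (m-k)) (qFactP k)] at h3
  exact mul_right_cancel₀ (mul_ne_zero (qFactP_ne_zero k) (qFactP_ne_zero (m-k))) h3

lemma qBinomP_eq_gb {m k : ℕ} (h : k ≤ m) : qBinomP m k = gb m k := by
  rw [qBinomP, if_pos h, ← gb_mul_fact m k h, mul_comm]
  exact mul_divByMonic_cancel_left _ ((qFactP_monic k).mul (qFactP_monic (m-k)))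

/-- the "other" q-Pascal recurrence, via symmetry. -/
lemma gb_pascal' (k j : ℕ) :
    gb (k + j + 2) (k + 1) = gb (k + j + 1) (k + 1) + X ^ (j + 1) * gb (k + j + 1) k := by
  have h1 : gb (k + j + 2) (k + 1) = gb (k + j + 2) (j + 1) := by
    have := gb_symm (m := k + j + 2) (k := k + 1) (by omega)
    rw [show k + j + 2 - (k + 1) = j + 1 by omega] at this
    exact this
  have h2 : gb (k + j + 1) j = gb (k + j + 1) (k + 1) := by
    have := gb_symm (m := k + j + 1) (k := j) (by omega)
    rw [show k + j + 1 - j = k + 1 by omega] at this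
    exact this
  have h3 : gb (k + j + 1) (j + 1) = gb (k + j + 1) k := by
    have := gb_symm (m := k + j + 1) (k := j + 1) (by omega)
    rw [show k + j + 1 - (j + 1) = k by omega] at this
    exact this
  rw [h1, show k + j + 2 = (k + j + 1) + 1 by omega, gb_succ_succ, h2, h3]

lemma gb_one (m : ℕ) : gb m 1 = qIntP m := by
  induction m with
  | zero => simp [qIntP_zero]
  | succ m ih =>
      rw [gb_succ_succ, ih, gb_right_zero, pow_one, ← qIntP_one_add,
        Nat.add_comm 1 m]

/-! ### nonnegativity of coefficients -/

def NN (p : Polynomial ℤ) : Prop := ∀ i, 0 ≤ p.coeff i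

lemma NN_zero : NN 0 := fun i => by simp

lemma NN_one : NN 1 := fun i => by
  rcases Nat.eq_zero_or_pos i with h | h <;> simp [h, coeff_one] <;> positivity

lemma NN_add {p q : Polynomial ℤ} (hp : NN p) (hq : NN q) : NN (p + q) := fun i => by
  rw [coeff_add]; exact add_nonneg (hp i) (hq i)

lemma NN_mul {p q : Polynomial ℤ} (hp : NN p) (hq : NN q) : NN (p * q) := fun i => by
  rw [coeff_mul]
  exact Finset.sum_nonneg fun x _ => mul_nonneg (hp _) (hq _)

lemma NN_pow {p : Polynomial ℤ} (hp : NN p) (n : ℕ) : NN (p ^ n) := by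
  induction n with
  | zero => simpa using NN_one
  | succ n ih => rw [pow_succ]; exact NN_mul ih hp

lemma NN_X_pow (n : ℕ) : NN ((X : Polynomial ℤ) ^ n) := fun i => by
  rw [coeff_X_pow]; split <;> norm_num

lemma NN_C {a : ℤ} (ha : 0 ≤ a) : NN (C a) := fun i => by
  rw [coeff_C]; split <;> simp [ha]

lemma NN_qIntP (n : ℕ) : NN (qIntP n) := fun i => by
  rw [qIntP_coeff]; split <;> norm_num

lemma NN_comp {p q : Polynomial ℤ} (hp : NN p) (hq : NN q) : NN (p.comp q) := by
  rw [comp_eq_sum_left, Polynomial.sum_def]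
  intro i
  rw [finset_sum_coeff]
  refine Finset.sum_nonneg fun e _ => ?_
  exact NN_mul (NN_C (hp e)) (NN_pow hq e) i

/-! ### nonnegativity of the differences `A` and `B` -/

lemma AB_nonneg : ∀ m k : ℕ,
    (2 * k + 1 ≤ m → NN (gb m (k + 1) - gb m k)) ∧
      (2 * k + 2 ≤ m → NN (gb m (k + 1) - X * gb m k)) := by
  intro m
  induction m with
  | zero => intro k; constructor <;> intro h <;> omega
  | succ m ih =>
      intro k
      constructor
      · intro hk
        rcases Nat.lt_or_ge m (2 * k + 1) with hm | hm
        · -- boundary: m + 1 = 2k + 1, the difference vanishes by symmetry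
          have hm' : m = 2 * k := by omega
          subst hm'
          have := gb_symm (m := 2 * k + 1) (k := k + 1) (by omega)
          rw [show 2 * k + 1 - (k + 1) = k by omega] at this
          rw [this, sub_self]
          exact NN_zero
        · rcases k with _ | j
          · -- k = 0 : qIntP (m+1) - 1
            rw [gb_one, gb_right_zero]
            intro i
            rw [coeff_sub, qIntP_coeff, coeff_one]
            split <;> split <;> simp_all <;> omega
          · -- k = j + 1
            obtain ⟨c, rfl⟩ : ∃ c, m = j + c + 2 := ⟨m - j - 2, by omega⟩
            have p1 : gb (j + c + 3) (j + 2) =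
                gb (j + c + 2) (j + 2) + X ^ (c + 1) * gb (j + c + 2) (j + 1) := by
              have := gb_pascal' (j + 1) c
              rw [show j + 1 + c + 2 = j + c + 3 by omega,
                show j + 1 + c + 1 = j + c + 2 by omega] at this
              exact this
            have p2 : gb (j + c + 3) (j + 1) =
                gb (j + c + 2) (j + 1) + X ^ (c + 2) * gb (j + c + 2) j := by
              have := gb_pascal' j (c + 1)
              rw [show j + (c + 1) + 2 = j + c + 3 by omega,
                show j + (c + 1) + 1 = j + c + 2 by omega] at this
              exact this
            have key : gb (j + c + 3) (j + 2) - gb (j + c + 3) (j + 1) =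
                (gb (j + c + 2) (j + 2) - gb (j + c + 2) (j + 1)) +
                  X ^ (c + 1) * (gb (j + c + 2) (j + 1) - X * gb (j + c + 2) j) := by
              rw [p1, p2, pow_succ]
              ring
            rw [key]
            exact NN_add ((ih (j + 1)).1 (by omega))
              (NN_mul (NN_X_pow (c + 1)) ((ih j).2 (by omega)))
      · intro hk
        rcases k with _ | j
        · -- k = 0 : qIntP (m+1) - X
          rw [gb_one, gb_right_zero, mul_one]
          intro i
          rw [coeff_sub, qIntP_coeff, coeff_X]
          split <;> split <;> simp_all <;> omega
        · have key : gb (m + 1) (j + 2) - X * gb (m + 1) (j + 1) =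
              X ^ (j + 2) * (gb m (j + 2) - gb m (j + 1)) +
                (gb m (j + 1) - X * gb m j) := by
            rw [gb_succ_succ m (j + 1), gb_succ_succ m j, pow_succ]
            ring
          rw [key]
          exact NN_add (NN_mul (NN_X_pow (j + 2)) ((ih (j + 1)).1 (by omega)))
            ((ih j).2 (by omega))

/-! ### the q-Catalan polynomial -/

noncomputable def Cpoly (n : ℕ) : Polynomial ℤ := gb (2 * n) n - X * gb (2 * n) (n + 1)

lemma Cpoly_zero : Cpoly 0 = 1 := by
  simp [Cpoly, gb_eq_zero 0 1 (by omega)]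

/-- identity (ii): `[n+1]_q · C_n(q) = [2n choose n]_q`. -/
lemma qIntP_mul_Cpoly (s : ℕ) : qIntP (s + 1) * Cpoly s = gb (2 * s) s := by
  rcases s with _ | t
  · simp [Cpoly_zero, qIntP_one]
  · have h1 := gb_mul_fact (2 * (t+1)) (t+1) (by omega)
    rw [show 2 * (t+1) - (t+1) = t+1 by omega] at h1
    have h2 := gb_mul_fact (2 * (t+1)) (t + 2) (by omega)
    rw [show 2 * (t+1) - (t+2) = t by omega] at h2
    apply mul_right_cancel₀
      (mul_ne_zero (qFactP_ne_zero (t + 2)) (qFactP_ne_zero (t+1)))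
    have e1 : qFactP (t + 2) = qFactP (t+1) * qIntP (t + 2) := qFactP_succ (t+1)
    have e2 : qFactP (t+1) = qFactP t * qIntP (t+1) := qFactP_succ t
    have e5 : qIntP (t + 2) = 1 + X * qIntP (t+1) := by
      rw [← qIntP_one_add, Nat.add_comm 1 (t+1)]
    rw [Cpoly, show (t+1) + 1 = t + 2 by omega]
    rw [e2] at h1
    rw [e1, e2] at h2
    rw [e1, e2]
    linear_combination (qIntP (t+2)^2 - qIntP (t+2)) * h1
      - (X * qIntP (t+1) * qIntP (t+2)) * h2
      + (qIntP (t+2) * qFactP (2*(t+1))) * e5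

/-- identity (iii): `[2s+1]_q · C_s(q) = [2s+1 choose s+1]_q`. -/
lemma qIntP_odd_mul_Cpoly (s : ℕ) : qIntP (2 * s + 1) * Cpoly s = gb (2 * s + 1) (s + 1) := by
  rcases s with _ | t
  · rw [Cpoly_zero, qIntP_one, show 2 * 0 + 1 = 0 + 1 by rfl, gb_succ_succ]
    simp
  · set s := t + 1 with hs
    have h1 := gb_mul_fact (2 * s) s (by omega)
    rw [show 2 * s - s = s by omega] at h1
    have h2 := gb_mul_fact (2 * s) (s + 1) (by omega)
    rw [show 2 * s - (s + 1) = t by omega] at h2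
    have h3 := gb_mul_fact (2 * s + 1) (s + 1) (by omega)
    rw [show 2 * s + 1 - (s + 1) = s by omega] at h3
    apply mul_right_cancel₀
      (mul_ne_zero (qFactP_ne_zero (s + 1)) (qFactP_ne_zero s))
    have e1 : qFactP (s + 1) = qFactP s * qIntP (s + 1) := qFactP_succ s
    have e2 : qFactP s = qFactP t * qIntP s := qFactP_succ t
    have e4 : qFactP (2 * s + 1) = qFactP (2 * s) * qIntP (2 * s + 1) := qFactP_succ (2 * s)
    have e5 : qIntP (s + 1) = 1 + X * qIntP s := by
      rw [← qIntP_one_add, Nat.add_comm 1 s]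
    rw [Cpoly]
    rw [e2] at h1
    rw [e1, e2] at h2
    rw [e1, e2, e4] at h3
    rw [e1, e2]
    linear_combination (qIntP (2*s+1) * qIntP (s+1)) * h1
      - (X * qIntP (2*s+1) * qIntP s) * h2 - h3
      + (qIntP (2*s+1) * qFactP (2*s)) * e5

/-- identity (i'): `q^{n} C_n(q) = [2n choose n]_q − [2n choose n−1]_q` for `n = t+1`. -/
lemma Xpow_mul_Cpoly (t : ℕ) :
    X ^ (t + 1) * Cpoly (t + 1) = gb (2 * t + 2) (t + 1) - gb (2 * t + 2) t := by
  have f1 := gb_mul_fact (2 * t + 2) (t + 1) (by omega)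
  rw [show 2 * t + 2 - (t + 1) = t + 1 by omega] at f1
  have f2 := gb_mul_fact (2 * t + 2) (t + 2) (by omega)
  rw [show 2 * t + 2 - (t + 2) = t by omega] at f2
  have f3 := gb_mul_fact (2 * t + 2) t (by omega)
  rw [show 2 * t + 2 - t = t + 2 by omega] at f3
  apply mul_right_cancel₀
    (mul_ne_zero (qFactP_ne_zero (t + 2)) (qFactP_ne_zero (t + 1)))
  have e1 : qFactP (t + 2) = qFactP (t + 1) * qIntP (t + 2) := qFactP_succ (t + 1)
  have e2 : qFactP (t + 1) = qFactP t * qIntP (t + 1) := qFactP_succ t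
  have e5 : qIntP (t + 2) = 1 + X * qIntP (t + 1) := by
    rw [← qIntP_one_add, Nat.add_comm 1 (t + 1)]
  have e6 : qIntP (t + 2) = qIntP (t + 1) + X ^ (t + 1) := qIntP_succ (t + 1)
  rw [Cpoly, show 2 * (t + 1) = 2 * t + 2 by omega, show t + 1 + 1 = t + 2 by omega]
  rw [e2] at f1
  rw [e1, e2] at f2
  rw [e1, e2] at f3
  rw [e1, e2]
  linear_combination ((X ^ (t + 1) - 1) * qIntP (t + 2)) * f1
    - (X ^ (t + 2) * qIntP (t + 1)) * f2 + qIntP (t + 1) * f3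
    + (qFactP (2 * t + 2) * X ^ (t + 1)) * e5 - qFactP (2 * t + 2) * e6

lemma NN_Cpoly (n : ℕ) : NN (Cpoly n) := by
  rcases n with _ | t
  · rw [Cpoly_zero]; exact NN_one
  · have h := Xpow_mul_Cpoly t
    have hA : NN (gb (2 * t + 2) (t + 1) - gb (2 * t + 2) t) := by
      rcases t with _ | u
    -- t = 0 : gb 2 1 - gb 2 0 = qIntP 2 - 1
      · intro i
        rw [gb_one, gb_right_zero, coeff_sub, qIntP_coeff, coeff_one]
        split <;> split <;> simp_all <;> omega
      · exact (AB_nonneg (2 * (u + 1) + 2) (u + 1)).1 (by omega)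
    intro i
    have := hA (i + (t + 1))
    rw [← h, coeff_X_pow_mul] at this
    exact this

lemma qCatalanP_eq_Cpoly (n : ℕ) : qCatalanP n = Cpoly n := by
  rw [qCatalanP, qBinomP_eq_gb (by omega), ← qIntP_mul_Cpoly n]
  exact mul_divByMonic_cancel_left _ (qIntP_monic n)

/-! ### behaviour under `q ↦ −q` and `q ↦ q²` -/

lemma qIntP_comp (n : ℕ) (p : Polynomial ℤ) :
    (qIntP n).comp p = ∑ i ∈ Finset.range n, p ^ i := by
  simp [qIntP, comp, eval₂_finset_sum]

lemma Xsq_sub_one_ne_zero : (X ^ 2 - 1 : Polynomial ℤ) ≠ 0 := by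
  intro h
  have := congrArg (fun p : Polynomial ℤ => p.coeff 0) h
  simp at this

/-- `[N]_{−q} · [N]_q = [N]_{q²}` for odd `N = 2s+1`. -/
lemma qIntP_comp_neg_mul (s : ℕ) :
    (qIntP (2 * s + 1)).comp (-X) * qIntP (2 * s + 1) =
      (qIntP (2 * s + 1)).comp (X ^ 2) := by
  apply mul_right_cancel₀ Xsq_sub_one_ne_zero
  rw [qIntP_comp, qIntP_comp, qIntP]
  have g1 := geom_sum_mul (X : Polynomial ℤ) (2 * s + 1)
  have g2 := geom_sum_mul (-X : Polynomial ℤ) (2 * s + 1)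
  have g3 := geom_sum_mul ((X : Polynomial ℤ) ^ 2) (2 * s + 1)
  rw [Odd.neg_pow ⟨s, by omega⟩] at g2
  linear_combination (-(∑ i ∈ Finset.range (2*s+1), (X:Polynomial ℤ) ^ i) * (X - 1)) * g2
    + ((X : Polynomial ℤ) ^ (2*s+1) + 1) * g1 - g3

lemma qIntP_eval_one (n : ℕ) : (qIntP n).eval 1 = (n : ℤ) := by
  simp [qIntP, eval_finset_sum]

lemma qIntP_comp_sq_ne_zero (s : ℕ) : (qIntP (2 * s + 1)).comp (X ^ 2) ≠ 0 := by
  intro h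
  have := congrArg (fun p : Polynomial ℤ => p.eval 1) h
  simp [eval_comp, qIntP_eval_one] at this
  omega

end QAux

open QAux in
/-- For `r ≥ 1`: substituting `q ↦ −q` in
`T_r(2r−1,q) = q^{r²−r}·[2r−1 choose r]_{q²}/[2r−1]_q` (the polynomial `T`
determined by `[2r−1]_q·T(q) = q^{r²−r}·[2r−1 choose r]_{q²}`) yields
`q^{r²−r}·[2r−1]_q·C_{r−1}(q²)`; in particular `T_r(2r−1,−q)` is a polynomial
with only nonnegative coefficients. -/
theorem Tr_at_neg_q (r : ℕ) (hr : 1 ≤ r) (T : Polynomial ℤ)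
    (hT : qIntP (2 * r - 1) * T = Polynomial.X ^ (r ^ 2 - r) * qBinomP2 (2 * r - 1) r) :
    T.comp (-Polynomial.X) =
        Polynomial.X ^ (r ^ 2 - r) * qIntP (2 * r - 1) *
          (qCatalanP (r - 1)).comp (Polynomial.X ^ 2) ∧
      ∀ i : ℕ, 0 ≤ (T.comp (-Polynomial.X)).coeff i := by
  obtain ⟨s, rfl⟩ : ∃ s, r = s + 1 := ⟨r - 1, by omega⟩
  have hN : 2 * (s + 1) - 1 = 2 * s + 1 := by omega
  have hs1 : s + 1 - 1 = s := by omega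
  have he : (s + 1) ^ 2 - (s + 1) = s * (s + 1) := by
    have : (s + 1) ^ 2 = s * (s + 1) + (s + 1) := by ring
    omega
  rw [hN, he] at hT ⊢
  rw [hs1]
  have hEven : Even (s * (s + 1)) := Nat.even_mul_succ_self s
  have hB : qBinomP2 (2 * s + 1) (s + 1) = (gb (2 * s + 1) (s + 1)).comp (X ^ 2) := by
    rw [qBinomP2, qBinomP_eq_gb (show s + 1 ≤ 2 * s + 1 by omega)]
  have hgb : gb (2 * s + 1) (s + 1) = qIntP (2 * s + 1) * Cpoly s :=
    (qIntP_odd_mul_Cpoly s).symm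
  have hTc := congrArg (fun p : Polynomial ℤ => p.comp (-X)) hT
  simp only [mul_comp, pow_comp, X_comp] at hTc
  have hBc : (qBinomP2 (2 * s + 1) (s + 1)).comp (-X) = qBinomP2 (2 * s + 1) (s + 1) := by
    rw [qBinomP2, comp_assoc]
    congr 1
    rw [pow_comp, X_comp, neg_sq]
  rw [hBc, hEven.neg_pow] at hTc
  have key := qIntP_comp_neg_mul s
  have main : T.comp (-X) =
      X ^ (s * (s + 1)) * qIntP (2 * s + 1) * (Cpoly s).comp (X ^ 2) := by
    apply mul_left_cancel₀ (qIntP_comp_sq_ne_zero s)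
    calc (qIntP (2 * s + 1)).comp (X ^ 2) * T.comp (-X)
        = qIntP (2 * s + 1) * ((qIntP (2 * s + 1)).comp (-X) * T.comp (-X)) := by
          rw [← key]; ring
      _ = qIntP (2 * s + 1) * (X ^ (s * (s + 1)) * qBinomP2 (2 * s + 1) (s + 1)) := by
          rw [hTc]
      _ = qIntP (2 * s + 1) *
            (X ^ (s * (s + 1)) * ((qIntP (2 * s + 1) * Cpoly s).comp (X ^ 2))) := by
          rw [hB, hgb]
      _ = (qIntP (2 * s + 1)).comp (X ^ 2) *
            (X ^ (s * (s + 1)) * qIntP (2 * s + 1) * (Cpoly s).comp (X ^ 2)) := by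
          rw [mul_comp]; ring
  refine ⟨by rw [main, qCatalanP_eq_Cpoly], ?_⟩
  rw [main]
  exact fun i =>
    NN_mul (NN_mul (NN_X_pow _) (NN_qIntP _)) (NN_comp (NN_Cpoly s) (NN_X_pow 2)) i
end
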